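/- arXiv:2603.04561 — 4 statements merged into one kernel-verified Lean document; each statement's English description precedes it below -/
import Mathlib

section
/- Suppose r ≥ 3 is odd. Then for each sign ε ∈ {+1,−1} the following hold in Cl ⊗ Cl: p_{ε,−ε}·Π_{m=0}^{(r−1)/2} ( Ĉ − c_{2m}·(1⊗1) ) = 0, and p_{εε}·Π_{m=1}^{(r+1)/2} ( Ĉ − c_{2m−1}·(1⊗1) ) = 0, where c_k := (2k(2r−k) − r(2r−1))/(16(r−1)). -/
open scoped TensorProduct

noncomputable section

/-- The quadratic form `x₁² + ⋯ + x_{2r}²` on `ℂ^{2r}`. -/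
def Qf (r : ℕ) : QuadraticForm ℂ (Fin (2*r) → ℂ) :=
  QuadraticMap.weightedSumSquares ℂ (fun _ : Fin (2*r) => (1:ℂ))

/-- The Clifford algebra of `Qf r`. -/
abbrev Cl (r : ℕ) := CliffordAlgebra (Qf r)

/-- The generators `Γ_i`. -/
def Γgen (r : ℕ) (i : Fin (2*r)) : Cl r :=
  CliffordAlgebra.ι (Qf r) (Pi.single i 1)

/-- The antisymmetrised products `Γ_{[i₁…i_k]}`. -/
def Γbr (r k : ℕ) (i : Fin k → Fin (2*r)) : Cl r :=
  ((k.factorial : ℂ))⁻¹ •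
    ∑ σ : Equiv.Perm (Fin k),
      ((Equiv.Perm.sign σ : ℤ) : ℂ) • (List.ofFn fun j => Γgen r (i (σ j))).prod

/-- The invariants `I_k ∈ Cl ⊗ Cl`. -/
def Ik (r k : ℕ) : Cl r ⊗[ℂ] Cl r :=
  ∑ i : Fin k → Fin (2*r), (Γbr r k i) ⊗ₜ[ℂ] (Γbr r k i)

/-- The split Casimir element `Ĉ = −I₂/(16(2r−2))`. -/
def sC (r : ℕ) : Cl r ⊗[ℂ] Cl r := (-(16*(2*(r:ℂ)-2))⁻¹) • Ik r 2

/-- The top element `Γ_{2r+1} = (−i)^r Γ₁⋯Γ_{2r}`. -/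
def Γtop (r : ℕ) : Cl r :=
  ((-Complex.I)^r) • (List.ofFn fun i : Fin (2*r) => Γgen r i).prod

/-- The chirality projector `p_ε = (1 + ε Γ_{2r+1})/2`. -/
def pCh (r : ℕ) (ε : ℂ) : Cl r := (2:ℂ)⁻¹ • (1 + ε • Γtop r)

/-- The chirality projectors `p_{εε'} = p_ε ⊗ p_{ε'}`. -/
def ppCh (r : ℕ) (ε ε' : ℂ) : Cl r ⊗[ℂ] Cl r := (pCh r ε) ⊗ₜ[ℂ] (pCh r ε')

/-- The eigenvalues `c_k = (2k(2r−k) − r(2r−1))/(16(r−1))`. -/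
def cEv (r k : ℕ) : ℂ :=
  (2*(k:ℂ)*(2*(r:ℂ)-(k:ℂ)) - (r:ℂ)*(2*(r:ℂ)-1)) / (16*((r:ℂ)-1))

/-- The spectral projectors `P_k = Π_{j≠k} (Ĉ − c_j)/(c_k − c_j)`. -/
def Pk (r k : ℕ) : Cl r ⊗[ℂ] Cl r :=
  (((List.range (r+1)).filter (fun j => j ≠ k)).map
    (fun j => (cEv r k - cEv r j)⁻¹ • (sC r - cEv r j • 1))).prod

/-- `P_r^S = (p_{++} + p_{−−})·P_r`. -/
def PrS (r : ℕ) : Cl r ⊗[ℂ] Cl r := (ppCh r 1 1 + ppCh r (-1) (-1)) * Pk r r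

/-- The ascending factorial `a_k(u) = (u/2)(u/2+1)⋯(u/2+k−1)`. -/
def asc (u : ℂ) (k : ℕ) : ℂ := ∏ j ∈ Finset.range k, (u/2 + (j:ℂ))

section KeyLemma
open Polynomial


lemma pow_mul_e {A : Type*} [Ring A] {u v e : A} (huv : Commute u v)
    (hue : u * e = v * e) : ∀ m : ℕ, u ^ m * e = v ^ m * e := by
  intro m
  induction m with
  | zero => simp
  | succ m ih =>
    rw [pow_succ, mul_assoc, hue, ← mul_assoc, huv.pow_left m, mul_assoc, ih,
      ← mul_assoc, ← pow_succ']

lemma aeval_mul_e {A : Type*} [Ring A] [Algebra ℂ A] {u v e : A} (huv : Commute u v)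
    (hue : u * e = v * e) (f : ℂ[X]) :
    (aeval u f) * e = (aeval v f) * e := by
  rw [aeval_eq_sum_range (p := f) u, aeval_eq_sum_range (p := f) v,
    Finset.sum_mul, Finset.sum_mul]
  exact Finset.sum_congr rfl fun i _ => by
    rw [smul_mul_assoc, smul_mul_assoc, pow_mul_e huv hue i]

lemma commute_aeval {A : Type*} [Ring A] [Algebra ℂ A] {x y : A} (h : Commute x y)
    (f : ℂ[X]) : Commute x (aeval y f) := by
  rw [aeval_eq_sum_range]
  exact Commute.sum_right _ _ _ fun i _ => ((h.pow_right i).smul_right _)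

/-- The key abstract lemma: if `l` is a list of pairwise commuting square roots of 1,
`S` its sum, `P` its product, then `(1 - σ•P) * f(S) = 0` provided `f` vanishes at
all `n - 2k` with `(-1)^k ≠ σ`. -/
lemma key {A : Type*} [Ring A] [Algebra ℂ A] :
    ∀ (l : List A), (∀ x ∈ l, x * x = 1) → l.Pairwise Commute →
      ∀ (σ : ℂ) (f : ℂ[X]),
        (∀ k : ℕ, k ≤ l.length → ((-1:ℂ))^k ≠ σ → f.eval ((l.length : ℂ) - 2*k) = 0) →
        (1 - σ • l.prod) * (aeval l.sum f) = 0 := by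
  intro l
  induction l with
  | nil =>
    intro _ _ σ f hf
    by_cases hσ : σ = 1
    · subst hσ
      simp
    · have h0 : f.eval 0 = 0 := by
        simpa using hf 0 (by simp) (by simpa using Ne.symm hσ)
      have : (aeval ((List.nil : List A).sum)) f = 0 := by
        simp only [List.sum_nil]
        rw [aeval_def, eval₂_at_zero, coeff_zero_eq_eval_zero, h0, map_zero]
      rw [this, mul_zero]
  | cons x t ih =>
    intro hsq hpw σ f hf
    rw [List.pairwise_cons] at hpw
    obtain ⟨hxt, hpt⟩ := hpw
    have hx2 : x * x = 1 := hsq x (by simp)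
    have htsq : ∀ y ∈ t, y * y = 1 := fun y hy => hsq y (by simp [hy])
    set s := t.sum with hs
    set P := t.prod with hP
    have hxs : Commute x s := Commute.list_sum_right _ _ fun y hy => hxt y hy
    have hxP : Commute x P := Commute.list_prod_right _ _ fun y hy => hxt y hy
    have hall : ∀ y ∈ t, ∀ z ∈ t, Commute y z := by
      intro y hy z hz
      by_cases hyz : y = z
      · subst hyz; exact Commute.refl y
      · haveI : Std.Symm (Commute : A → A → Prop) := ⟨fun _ _ h => h.symm⟩
        exact hpt.forall hy hz hyz
    have hPs : Commute P s :=
      Commute.list_sum_right _ _ fun y hy =>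
        (Commute.list_prod_right t y fun z hz => hall y hy z hz).symm
    -- idempotent-like elements
    set ep : A := (2:ℂ)⁻¹ • (1 + x) with hep
    set em : A := (2:ℂ)⁻¹ • (1 - x) with hem
    have hepem : ep + em = 1 := by
      rw [hep, hem, ← smul_add]
      have : (1 + x) + (1 - x) = (2:ℂ) • (1:A) := by
        rw [two_smul]; abel
      rw [this, smul_smul]
      norm_num
    have hxep : x * ep = ep := by
      rw [hep, mul_smul_comm, mul_add, mul_one, hx2, add_comm]
    have hxem : x * em = -em := by
      rw [hem, mul_smul_comm, mul_sub, mul_one, hx2, ← smul_neg, neg_sub]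
    have hPep : Commute P ep := (((Commute.one_left P).add_left hxP).smul_left _).symm
    have hPem : Commute P em := (((Commute.one_left P).sub_left hxP).smul_left _).symm
    have he1 : (x + s) * ep = (s + 1) * ep := by
      rw [add_mul, add_mul, hxep, one_mul, add_comm]
    have he2 : (x + s) * em = (s - 1) * em := by
      rw [add_mul, sub_mul, hxem, one_mul, sub_eq_add_neg, add_comm]
    have hcom1 : Commute (x + s) (s + 1) :=
      (hxs.add_right (Commute.one_right x)).add_left
        ((Commute.refl s).add_right (Commute.one_right s))
    have hcom2 : Commute (x + s) (s - 1) :=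
      (hxs.sub_right (Commute.one_right x)).add_left
        ((Commute.refl s).sub_right (Commute.one_right s))
    -- the two shifted polynomials
    set f1 : ℂ[X] := f.comp (X + C 1) with hf1
    set f2 : ℂ[X] := f.comp (X - C 1) with hf2
    have haev1 : aeval (s + 1) f = aeval s f1 := by
      rw [hf1, aeval_comp, map_add, aeval_X, aeval_C]
      norm_num
    have haev2 : aeval (s - 1) f = aeval s f2 := by
      rw [hf2, aeval_comp, map_sub, aeval_X, aeval_C]
      norm_num
    have hIH1 : (1 - σ • P) * (aeval s f1) = 0 := by
      apply ih htsq hpt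
      intro k hk hne
      rw [hf1, eval_comp]
      simp only [eval_add, eval_X, eval_C]
      have h := hf k (by simp [List.length_cons]; omega) hne
      rw [List.length_cons] at h
      convert h using 2
      · rfl
      push_cast
      ring
    have hIH2 : (1 - (-σ) • P) * (aeval s f2) = 0 := by
      apply ih htsq hpt
      intro k hk hne
      rw [hf2, eval_comp]
      simp only [eval_sub, eval_X, eval_C]
      have h : ((-1:ℂ))^(k+1) ≠ σ → eval ((↑(x :: t).length : ℂ) - 2*(↑(k+1))) f = 0 :=
        hf (k+1) (by simp [List.length_cons]; omega)
      rw [List.length_cons] at h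
      have h2 : eval ((↑(t.length + 1) : ℂ) - 2*(↑(k+1))) f = eval ((↑t.length : ℂ) - 2*↑k - 1) f := by
        congr 1
        push_cast
        ring
      rw [h2] at h
      apply h
      intro hcon
      apply hne
      rw [pow_succ] at hcon
      have := congrArg (fun z => -z) hcon
      simpa using this
    -- commuting facts for moving factors around
    have hxP1 : Commute (x * P) (s + 1) :=
      (hxs.add_right (Commute.one_right x)).mul_left (hPs.add_right (Commute.one_right P))
    have hxP2 : Commute (x * P) (s - 1) :=
      (hxs.sub_right (Commute.one_right x)).mul_left (hPs.sub_right (Commute.one_right P))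
    have hA1 : Commute (1 - σ • (x * P)) (aeval (s+1) f) :=
      commute_aeval ((Commute.one_left (s+1)).sub_left (hxP1.smul_left σ)) f
    have hA2 : Commute (1 - σ • (x * P)) (aeval (s-1) f) :=
      commute_aeval ((Commute.one_left (s-1)).sub_left (hxP2.smul_left σ)) f
    have hB1 : Commute (1 - σ • P) (aeval (s+1) f) :=
      commute_aeval ((Commute.one_left (s+1)).sub_left
        ((hPs.add_right (Commute.one_right P)).smul_left σ)) f
    have hB2 : Commute (1 - (-σ) • P) (aeval (s-1) f) :=
      commute_aeval ((Commute.one_left (s-1)).sub_left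
        ((hPs.sub_right (Commute.one_right P)).smul_left (-σ))) f
    -- projector identities
    have hproj1 : (1 - σ • (x * P)) * ep = (1 - σ • P) * ep := by
      have hq : x * P * ep = P * ep := by
        rw [mul_assoc, hPep.eq, ← mul_assoc, hxep, ← hPep.eq]
      rw [sub_mul, sub_mul, one_mul, smul_mul_assoc, smul_mul_assoc, hq]
    have hproj2 : (1 - σ • (x * P)) * em = (1 - (-σ) • P) * em := by
      have hq : x * P * em = -(P * em) := by
        rw [mul_assoc, hPem.eq, ← mul_assoc, hxem, neg_mul, ← hPem.eq]
      rw [sub_mul, sub_mul, one_mul, smul_mul_assoc, smul_mul_assoc, hq, smul_neg,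
        sub_neg_eq_add, neg_smul, sub_neg_eq_add]
    -- now the main computation
    have main : (1 - σ • ((x :: t).prod)) * (aeval ((x :: t).sum) f)
        = (1 - σ • (x * P)) * (aeval (x + s) f * ep)
          + (1 - σ • (x * P)) * (aeval (x + s) f * em) := by
      rw [List.prod_cons, List.sum_cons, ← mul_add, ← mul_add, hepem, mul_one]
    rw [main, aeval_mul_e hcom1 he1 f, aeval_mul_e hcom2 he2 f]
    have T1 : (1 - σ • (x * P)) * (aeval (s + 1) f * ep) = 0 := by
      rw [← mul_assoc, hA1.eq, mul_assoc, hproj1, ← mul_assoc, ← hB1.eq, haev1,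
        hIH1, zero_mul]
    have T2 : (1 - σ • (x * P)) * (aeval (s - 1) f * em) = 0 := by
      rw [← mul_assoc, hA2.eq, mul_assoc, hproj2, ← mul_assoc, ← hB2.eq, haev2,
        hIH2, zero_mul]
    rw [T1, T2, add_zero]

end KeyLemma

-- quadratic form values
lemma Qf_single (r : ℕ) (i : Fin (2*r)) : Qf r (Pi.single i 1) = 1 := by
  rw [Qf, QuadraticMap.weightedSumSquares_apply]
  rw [Finset.sum_eq_single i]
  · simp
  · intro b _ hb
    simp [Pi.single_eq_of_ne hb]
  · simp

lemma Qf_polar (r : ℕ) {i j : Fin (2*r)} (h : i ≠ j) :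
    QuadraticMap.polar (⇑(Qf r)) (Pi.single i 1) (Pi.single j 1) = 0 := by
  rw [QuadraticMap.polar, Qf_single, Qf_single]
  have : Qf r (Pi.single i 1 + Pi.single j 1) = 2 := by
    rw [Qf, QuadraticMap.weightedSumSquares_apply]
    rw [Fintype.sum_eq_add i j h]
    · simp [Pi.single_eq_of_ne h, Pi.single_eq_of_ne (Ne.symm h)]
      norm_num
    · intro x ⟨hxi, hxj⟩
      simp [Pi.single_eq_of_ne hxi, Pi.single_eq_of_ne hxj]
  rw [this]
  ring

lemma gen_sq (r : ℕ) (i : Fin (2*r)) : Γgen r i * Γgen r i = 1 := by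
  rw [Γgen, CliffordAlgebra.ι_sq_scalar, Qf_single, map_one]

lemma gen_anti (r : ℕ) {i j : Fin (2*r)} (h : i ≠ j) :
    Γgen r i * Γgen r j = -(Γgen r j * Γgen r i) := by
  have := CliffordAlgebra.ι_mul_ι_add_swap (Q := Qf r) (Pi.single i 1) (Pi.single j 1)
  rw [Qf_polar r h, map_zero] at this
  rw [Γgen, Γgen]
  exact eq_neg_of_add_eq_zero_left this

lemma perm_fin_two_univ :
    (Finset.univ : Finset (Equiv.Perm (Fin 2))) = {1, Equiv.swap 0 1} := by
  decide

lemma Γbr_two (r : ℕ) (i : Fin 2 → Fin (2*r)) :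
    Γbr r 2 i = (2:ℂ)⁻¹ • (Γgen r (i 0) * Γgen r (i 1) - Γgen r (i 1) * Γgen r (i 0)) := by
  rw [Γbr, perm_fin_two_univ, Finset.sum_pair (by decide : (1 : Equiv.Perm (Fin 2)) ≠ Equiv.swap 0 1)]
  have h1 : (List.ofFn fun j : Fin 2 => Γgen r (i ((1 : Equiv.Perm (Fin 2)) j))).prod
      = Γgen r (i 0) * Γgen r (i 1) := by
    simp [List.ofFn_succ]
  have h2 : (List.ofFn fun j : Fin 2 => Γgen r (i ((Equiv.swap 0 1 : Equiv.Perm (Fin 2)) j))).prod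
      = Γgen r (i 1) * Γgen r (i 0) := by
    simp [List.ofFn_succ, Equiv.swap_apply_left, Equiv.swap_apply_right]
  rw [h1, h2]
  simp [Equiv.Perm.sign_swap (by decide : (0 : Fin 2) ≠ 1)]
  norm_num [Nat.factorial]
  rw [sub_eq_add_neg, smul_add, smul_neg]

lemma Γbr_two_eq (r : ℕ) (i : Fin 2 → Fin (2*r)) (h : i 0 = i 1) : Γbr r 2 i = 0 := by
  rw [Γbr_two, h, sub_self, smul_zero]

lemma Γbr_two_ne (r : ℕ) (i : Fin 2 → Fin (2*r)) (h : i 0 ≠ i 1) :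
    Γbr r 2 i = Γgen r (i 0) * Γgen r (i 1) := by
  rw [Γbr_two, gen_anti r (Ne.symm h), sub_neg_eq_add, ← two_smul ℂ, smul_smul]
  norm_num

/-- The list of commuting involutions `Γ_i ⊗ Γ_i`. -/
def AL (r : ℕ) : List (Cl r ⊗[ℂ] Cl r) :=
  List.ofFn (fun i : Fin (2*r) => Γgen r i ⊗ₜ[ℂ] Γgen r i)

lemma AL_length (r : ℕ) : (AL r).length = 2*r := by simp [AL]

lemma AL_sq (r : ℕ) : ∀ x ∈ AL r, x * x = 1 := by
  intro x hx
  rw [AL, List.mem_ofFn] at hx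
  obtain ⟨i, rfl⟩ := hx
  rw [Algebra.TensorProduct.tmul_mul_tmul, gen_sq, Algebra.TensorProduct.one_def]

lemma AL_comm (r : ℕ) : (AL r).Pairwise Commute := by
  rw [AL, List.pairwise_ofFn]
  intro i j hij
  have h : i ≠ j := Fin.ne_of_lt hij
  show _ = _
  rw [Algebra.TensorProduct.tmul_mul_tmul, Algebra.TensorProduct.tmul_mul_tmul,
    gen_anti r (Ne.symm h)]
  rw [TensorProduct.neg_tmul, TensorProduct.tmul_neg, neg_neg]

lemma Ik_two (r : ℕ) :
    Ik r 2 = (AL r).sum * (AL r).sum - ((2*r : ℕ) : ℂ) • 1 := by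
  have hsum : (AL r).sum = ∑ a : Fin (2*r), Γgen r a ⊗ₜ[ℂ] Γgen r a := by
    rw [AL, List.sum_ofFn]
  have hSS : (AL r).sum * (AL r).sum
      = ∑ a : Fin (2*r), ∑ b : Fin (2*r),
          (Γgen r a ⊗ₜ[ℂ] Γgen r a) * (Γgen r b ⊗ₜ[ℂ] Γgen r b) := by
    rw [hsum, Finset.sum_mul_sum]
  have hIk : Ik r 2 = ∑ a : Fin (2*r), ∑ b : Fin (2*r),
      ((Γgen r a ⊗ₜ[ℂ] Γgen r a) * (Γgen r b ⊗ₜ[ℂ] Γgen r b)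
        - if a = b then 1 else 0) := by
    rw [Ik]
    rw [Fintype.sum_equiv (finTwoArrowEquiv (Fin (2*r)))
      (fun i => (Γbr r 2 i) ⊗ₜ[ℂ] (Γbr r 2 i))
      (fun p => (Γgen r p.1 ⊗ₜ[ℂ] Γgen r p.1) * (Γgen r p.2 ⊗ₜ[ℂ] Γgen r p.2)
        - if p.1 = p.2 then 1 else 0)]
    · rw [Fintype.sum_prod_type]
    · intro i
      simp only [finTwoArrowEquiv, piFinTwoEquiv_apply, Equiv.coe_fn_mk, Equiv.toFun_as_coe]
      by_cases h : i 0 = i 1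
      · rw [Γbr_two_eq r i h, if_pos h, Algebra.TensorProduct.tmul_mul_tmul, h, gen_sq,
          Algebra.TensorProduct.one_def]
        simp
      · rw [Γbr_two_ne r i h, if_neg h, Algebra.TensorProduct.tmul_mul_tmul, sub_zero]
  rw [hIk, hSS]
  simp only [Finset.sum_sub_distrib]
  congr 1
  rw [Nat.cast_smul_eq_nsmul]
  simp [Finset.sum_ite_eq, Finset.card_univ]

lemma list_move {A : Type*} [Ring A] [Algebra ℂ A] :
    ∀ (l : List A) (x : A), (∀ y ∈ l, y * x = -(x * y)) →
      l.prod * x = ((-1:ℂ)^l.length) • (x * l.prod) := by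
  intro l
  induction l with
  | nil => intro x _; simp
  | cons y t ih =>
    intro x hx
    rw [List.prod_cons, List.length_cons, mul_assoc, ih x (fun z hz => hx z (by simp [hz])),
      mul_smul_comm, ← mul_assoc, hx y (by simp), neg_mul, pow_succ, mul_comm ((-1:ℂ)^t.length),
      mul_smul, neg_one_smul, smul_neg, mul_assoc]

lemma list_sq {A : Type*} [Ring A] [Algebra ℂ A] :
    ∀ (l : List A), (∀ y ∈ l, y * y = 1) →
      l.Pairwise (fun a b => b * a = -(a * b)) →
      l.prod * l.prod = ((-1:ℂ)^(l.length.choose 2)) • 1 := by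
  intro l
  induction l with
  | nil => simp
  | cons x t ih =>
    intro hsq hpw
    rw [List.pairwise_cons] at hpw
    obtain ⟨hxt, hpt⟩ := hpw
    have h1 : t.prod * x = ((-1:ℂ)^t.length) • (x * t.prod) :=
      list_move t x (fun y hy => hxt y hy)
    rw [List.prod_cons, mul_assoc, ← mul_assoc t.prod, h1, smul_mul_assoc, mul_smul_comm,
      ← mul_assoc, ← mul_assoc, hsq x (by simp), one_mul,
      ih (fun y hy => hsq y (by simp [hy])) hpt, smul_smul, ← pow_add, List.length_cons]
    congr 2
    rw [Nat.choose_succ_succ, Nat.choose_one_right, add_comm]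

lemma gen_list_pairwise (r : ℕ) :
    (List.ofFn fun i : Fin (2*r) => Γgen r i).Pairwise (fun a b => b * a = -(a * b)) := by
  rw [List.pairwise_ofFn]
  intro i j hij
  exact gen_anti r (Ne.symm (Fin.ne_of_lt hij))

lemma Γtop_sq (r : ℕ) (hro : Odd r) : Γtop r * Γtop r = 1 := by
  rw [Γtop, smul_mul_assoc, mul_smul_comm, smul_smul]
  rw [list_sq _ (by intro y hy; rw [List.mem_ofFn] at hy; obtain ⟨i, rfl⟩ := hy; exact gen_sq r i)
    (gen_list_pairwise r)]
  rw [smul_smul, List.length_ofFn]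
  have hc : ((2*r).choose 2) = r * (2*r-1) := by
    rw [Nat.choose_two_right]
    have : 2*r*(2*r-1) = 2*(r*(2*r-1)) := by ring
    rw [this, Nat.mul_div_cancel_left _ (by norm_num)]
  have hodd : Odd (r * (2*r-1)) := hro.mul (by obtain ⟨m, hm⟩ := hro; exact ⟨2*m, by omega⟩)
  rw [hc, hodd.neg_one_pow]
  have : (-Complex.I)^r * (-Complex.I)^r = -1 := by
    rw [← pow_add, ← two_mul, pow_mul]
    norm_num [hro.neg_one_pow]
  rw [this]
  norm_num

lemma tmul_listProd (r : ℕ) : ∀ (n : ℕ) (x y : Fin n → Cl r),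
    (List.ofFn x).prod ⊗ₜ[ℂ] (List.ofFn y).prod
      = (List.ofFn fun i => x i ⊗ₜ[ℂ] y i).prod := by
  intro n
  induction n with
  | zero => intro x y; simp [Algebra.TensorProduct.one_def]
  | succ n ih =>
    intro x y
    rw [List.ofFn_succ, List.ofFn_succ, List.ofFn_succ, List.prod_cons, List.prod_cons,
      List.prod_cons, ← ih, Algebra.TensorProduct.tmul_mul_tmul]

lemma top_tmul_top (r : ℕ) (hro : Odd r) :
    Γtop r ⊗ₜ[ℂ] Γtop r = -(AL r).prod := by
  rw [Γtop, TensorProduct.tmul_smul, ← TensorProduct.smul_tmul', smul_smul, AL,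
    ← tmul_listProd r]
  have : (-Complex.I)^r * (-Complex.I)^r = -1 := by
    rw [← pow_add, ← two_mul, pow_mul]
    norm_num [hro.neg_one_pow]
  rw [this, neg_one_smul]

lemma ppCh_factor (r : ℕ) (hro : Odd r) (ε ε' : ℂ) (hε2 : ε * ε = 1) :
    ppCh r ε ε' = (4⁻¹:ℂ) •
      ((1 + ε • (Γtop r ⊗ₜ[ℂ] 1)) * (1 + (ε*ε') • (Γtop r ⊗ₜ[ℂ] Γtop r))) := by
  have hc : ε * (ε * ε') = ε' := by rw [← mul_assoc, hε2, one_mul]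
  rw [ppCh, pCh, pCh, TensorProduct.tmul_smul, ← TensorProduct.smul_tmul', smul_smul]
  have h4 : (2:ℂ)⁻¹ * (2:ℂ)⁻¹ = 4⁻¹ := by norm_num
  rw [h4]
  congr 1
  simp only [TensorProduct.tmul_add, TensorProduct.add_tmul, TensorProduct.tmul_smul,
    ← TensorProduct.smul_tmul', mul_add, add_mul, one_mul, mul_one, smul_mul_assoc,
    mul_smul_comm, Algebra.TensorProduct.tmul_mul_tmul, Γtop_sq r hro, smul_smul, hc,
    ← Algebra.TensorProduct.one_def]
  match_scalars <;> (try ring1) <;> linear_combination (-ε') * hε2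

/-- The scalar in front of `I₂`. -/
def βs (r : ℕ) : ℂ := -(16*(2*(r:ℂ)-2))⁻¹

open Polynomial in
lemma sC_factor (r : ℕ) (c : ℂ) :
    sC r - c • 1 = aeval (AL r).sum
      (C (βs r) * X^2 + C (-(βs r*(2*(r:ℂ))) - c)) := by
  rw [map_add, map_mul, aeval_C, map_pow, aeval_X, aeval_C]
  rw [Algebra.algebraMap_eq_smul_one, Algebra.algebraMap_eq_smul_one, smul_mul_assoc, one_mul,
    pow_two]
  rw [sC, Ik_two]
  have : ((2*r : ℕ) : ℂ) = 2*(r:ℂ) := by push_cast; ring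
  rw [this]
  show βs r • _ - _ = _
  module

lemma cEv_eval (r : ℕ) (hr : 3 ≤ r) (k' : ℕ) :
    -(βs r*(2*(r:ℂ))) - cEv r k' = -4 * βs r * ((r:ℂ)-(k':ℂ))^2 := by
  have h1 : (r:ℂ) ≠ 1 := by
    intro h
    have : r = 1 := by exact_mod_cast h
    omega
  have h2 : 2*(r:ℂ) - 2 ≠ 0 := by
    intro h
    exact h1 (by linear_combination h/2)
  have h3 : (r:ℂ) - 1 ≠ 0 := sub_ne_zero.mpr h1
  rw [cEv, βs]
  field_simp
  ring

open Polynomial in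
lemma main_aux (r : ℕ) (hr : 3 ≤ r) (σ : ℂ) (M : ℕ) (κ : ℕ → ℕ)
    (hroot : ∀ k : ℕ, k ≤ 2*r → ((-1:ℂ))^k ≠ σ →
      ∃ m, m < M ∧ (2*(r:ℂ) - 2*(k:ℂ))^2 = 4*((r:ℂ) - (κ m:ℂ))^2) :
    (1 - σ • (AL r).prod) *
      ((List.range M).map (fun m => sC r - cEv r (κ m) • 1)).prod = 0 := by
  set F : ℂ[X] := ((List.range M).map
    (fun m => C (βs r) * X^2 + C (-(βs r*(2*(r:ℂ))) - cEv r (κ m)))).prod with hF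
  have hprod : aeval (AL r).sum F
      = ((List.range M).map (fun m => sC r - cEv r (κ m) • 1)).prod := by
    rw [hF, map_list_prod, List.map_map]
    congr 1
    apply List.map_congr_left
    intro m _
    exact (sC_factor r (cEv r (κ m))).symm
  rw [← hprod]
  apply key (AL r) (AL_sq r) (AL_comm r) σ F
  intro k hk hne
  rw [AL_length] at hk
  obtain ⟨m, hm, hsq⟩ := hroot k hk hne
  have hpt : (((AL r).length : ℕ) : ℂ) = 2*(r:ℂ) := by rw [AL_length]; push_cast; ring
  rw [hpt, hF, eval_list_prod, List.map_map]
  apply List.prod_eq_zero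
  rw [List.mem_map]
  refine ⟨m, by rwa [List.mem_range], ?_⟩
  simp only [Function.comp, eval_add, eval_mul, eval_C, eval_pow, eval_X]
  rw [cEv_eval r hr, hsq]
  ring


/-- for odd `r ≥ 3`,
`p_{ε,−ε}·Π_{m=0}^{(r−1)/2} (Ĉ − c_{2m}·1) = 0` and
`p_{εε}·Π_{m=1}^{(r+1)/2} (Ĉ − c_{2m−1}·1) = 0`. -/
theorem sC_char_idens_odd_r (r : ℕ) (hr : 3 ≤ r) (hro : Odd r)
    (ε : ℂ) (hε : ε = 1 ∨ ε = -1) :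
    ppCh r ε (-ε) * ((List.range ((r-1)/2+1)).map (fun m => sC r - cEv r (2*m) • 1)).prod = 0 ∧
    ppCh r ε ε * ((List.range ((r+1)/2)).map (fun m => sC r - cEv r (2*m+1) • 1)).prod = 0 := by

  have hε2 : ε * ε = 1 := by rcases hε with h|h <;> subst h <;> norm_num
  have hrodd : r % 2 = 1 := Nat.odd_iff.mp hro
  constructor
  · -- even-k factors, σ = -1
    have hroot1 : ∀ k : ℕ, k ≤ 2*r → ((-1:ℂ))^k ≠ (-1:ℂ) →
        ∃ m, m < (r-1)/2+1 ∧ (2*(r:ℂ) - 2*(k:ℂ))^2 = 4*((r:ℂ) - ((2*m : ℕ):ℂ))^2 := by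
      intro k hk hne
      have hkeven : k % 2 = 0 := by
        rcases Nat.even_or_odd k with h|h
        · exact Nat.even_iff.mp h
        · exact absurd h.neg_one_pow hne
      rcases le_or_gt k r with hkr | hkr
      · refine ⟨k/2, by omega, ?_⟩
        have hkc : (k:ℂ) = 2*(↑(k/2):ℂ) := by
          have h : k = 2*(k/2) := by omega
          exact_mod_cast congrArg (Nat.cast : ℕ → ℂ) h
        push_cast
        rw [hkc]; ring
      · refine ⟨(2*r-k)/2, by omega, ?_⟩
        have h2c : 2*(r:ℂ) = 2*(↑((2*r-k)/2):ℂ) + (k:ℂ) := by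
          have h : 2*r = 2*((2*r-k)/2) + k := by omega
          exact_mod_cast congrArg (Nat.cast : ℕ → ℂ) h
        have hkc : (k:ℂ) = 2*(r:ℂ) - 2*(↑((2*r-k)/2):ℂ) := by linear_combination -h2c
        push_cast
        rw [hkc]; ring
    have hz := main_aux r hr (-1) ((r-1)/2+1) (fun m => 2*m) hroot1
    have h1 : ε * (-ε) = -1 := by rw [mul_neg, hε2]
    rw [ppCh_factor r hro ε (-ε) hε2, h1, top_tmul_top r hro]
    have h2 : (1:Cl r ⊗[ℂ] Cl r) + (-1:ℂ) • (-(AL r).prod)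
        = 1 - (-1:ℂ) • (AL r).prod := by
      rw [smul_neg, ← sub_eq_add_neg]
    rw [h2, smul_mul_assoc, mul_assoc]
    rw [show (1 - (-1:ℂ) • (AL r).prod) *
      ((List.range ((r-1)/2+1)).map (fun m => sC r - cEv r (2*m) • 1)).prod = 0 from hz]
    rw [mul_zero, smul_zero]
  · -- odd-k factors, σ = 1
    have hroot2 : ∀ k : ℕ, k ≤ 2*r → ((-1:ℂ))^k ≠ (1:ℂ) →
        ∃ m, m < (r+1)/2 ∧ (2*(r:ℂ) - 2*(k:ℂ))^2 = 4*((r:ℂ) - ((2*m+1 : ℕ):ℂ))^2 := by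
      intro k hk hne
      have hkodd : k % 2 = 1 := by
        rcases Nat.even_or_odd k with h|h
        · exact absurd h.neg_one_pow hne
        · exact Nat.odd_iff.mp h
      rcases le_or_gt k r with hkr | hkr
      · refine ⟨k/2, by omega, ?_⟩
        have hkc : (k:ℂ) = 2*(↑(k/2):ℂ) + 1 := by
          have h : k = 2*(k/2) + 1 := by omega
          exact_mod_cast congrArg (Nat.cast : ℕ → ℂ) h
        push_cast
        rw [hkc]; ring
      · refine ⟨(2*r-k)/2, by omega, ?_⟩
        have h2c : 2*(r:ℂ) = (2*(↑((2*r-k)/2):ℂ) + 1) + (k:ℂ) := by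
          have h : 2*r = (2*((2*r-k)/2) + 1) + k := by omega
          exact_mod_cast congrArg (Nat.cast : ℕ → ℂ) h
        have hkc : (k:ℂ) = 2*(r:ℂ) - (2*(↑((2*r-k)/2):ℂ) + 1) := by linear_combination -h2c
        push_cast
        rw [hkc]; ring
    have hz := main_aux r hr 1 ((r+1)/2) (fun m => 2*m+1) hroot2
    rw [ppCh_factor r hro ε ε hε2, hε2, top_tmul_top r hro]
    have h2 : (1:Cl r ⊗[ℂ] Cl r) + (1:ℂ) • (-(AL r).prod)
        = 1 - (1:ℂ) • (AL r).prod := by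
      rw [smul_neg, ← sub_eq_add_neg]
    rw [h2, smul_mul_assoc, mul_assoc]
    rw [show (1 - (1:ℂ) • (AL r).prod) *
      ((List.range ((r+1)/2)).map (fun m => sC r - cEv r (2*m+1) • 1)).prod = 0 from hz]
    rw [mul_zero, smul_zero]

end
end

section
/- For every ℂ-algebra isomorphism φ : Cl ≃ Matrix (Fin 2^r) ℂ, with Φ the induced isomorphism Cl ⊗ Cl ≃ Matrix ((Fin 2^r) × (Fin 2^r)) ℂ given by the Kronecker product Φ(a⊗b) = φ(a)⊗φ(b), the following trace formulas hold: Tr Φ(Ĉ^2) = 4^r·r(2r−1)/(256(r−1)^2), Tr Φ(Ĉ^3) = −4^r·r(2r−1)/(1024(r−1)^2), Tr Φ(Ĉ^4) = 4^r·r(2r−1)(30r^2−63r+34)/(2^{16}(r−1)^4), and Tr Φ(Ĉ^5) = −4^r·r(2r−1)(34r^2−89r+62)/(2^{17}(r−1)^4). -/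
open scoped TensorProduct

noncomputable section

namespace SC12
open Finset

variable (r : ℕ)

lemma Qf_single (i : Fin (2*r)) : Qf r (Pi.single i 1) = 1 := by
  simp [Qf, QuadraticMap.weightedSumSquares_apply, Pi.single_apply]

lemma Qf_polar {i j : Fin (2*r)} (h : i ≠ j) :
    QuadraticMap.polar (⇑(Qf r)) (Pi.single i 1) (Pi.single j 1) = 0 := by
  simp [QuadraticMap.polar, Qf, QuadraticMap.weightedSumSquares_apply, Pi.single_apply,
    add_mul, mul_add, Finset.sum_add_distrib, Finset.sum_ite_eq, Finset.sum_ite_eq',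
    h, h.symm]

lemma gamma_sq (i : Fin (2*r)) : Γgen r i * Γgen r i = 1 := by
  rw [Γgen, CliffordAlgebra.ι_sq_scalar, Qf_single, map_one]

lemma gamma_anti {i j : Fin (2*r)} (h : i ≠ j) :
    Γgen r i * Γgen r j = -(Γgen r j * Γgen r i) := by
  have h2 := CliffordAlgebra.ι_mul_ι_add_swap (Q := Qf r) (Pi.single i 1) (Pi.single j 1)
  rw [Qf_polar r h, map_zero] at h2
  rw [Γgen, Γgen]
  exact eq_neg_of_add_eq_zero_left h2

end SC12
namespace SC12b
open Finset SC12

variable (r : ℕ)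

/-- the diagonal monoid hom `a ↦ a ⊗ a`. -/
def mu : Cl r →* (Cl r ⊗[ℂ] Cl r) where
  toFun a := a ⊗ₜ[ℂ] a
  map_one' := by simp [Algebra.TensorProduct.one_def]
  map_mul' a b := by rw [Algebra.TensorProduct.tmul_mul_tmul]

def xg (i : Fin (2*r)) : Cl r ⊗[ℂ] Cl r := Γgen r i ⊗ₜ[ℂ] Γgen r i

lemma xg_eq_mu (i : Fin (2*r)) : xg r i = mu r (Γgen r i) := rfl

lemma xg_sq (i : Fin (2*r)) : xg r i * xg r i = 1 := by
  rw [xg_eq_mu, ← map_mul, gamma_sq, map_one]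

lemma xg_comm (i j : Fin (2*r)) : Commute (xg r i) (xg r j) := by
  rcases eq_or_ne i j with h | h
  · rw [h]
  · unfold Commute SemiconjBy
    rw [xg, xg, Algebra.TensorProduct.tmul_mul_tmul, Algebra.TensorProduct.tmul_mul_tmul,
      gamma_anti r h, TensorProduct.neg_tmul, TensorProduct.tmul_neg, neg_neg]

def Kel : Cl r ⊗[ℂ] Cl r := ∑ i, xg r i

end SC12b
namespace SC12b
open Finset SC12

variable (r : ℕ)

def xpl (l : List (Fin (2*r))) : Cl r ⊗[ℂ] Cl r := (l.map (xg r)).prod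

lemma xpl_pairwise (l : List (Fin (2*r))) : (l.map (xg r)).Pairwise Commute := by
  rw [List.pairwise_map]
  induction l with
  | nil => simp
  | cons a l ih => exact List.Pairwise.cons (fun b _ => xg_comm r a b) ih

lemma xpl_perm {l l' : List (Fin (2*r))} (h : l.Perm l') : xpl r l = xpl r l' :=
  List.Perm.prod_eq' (h.map _) (xpl_pairwise r l)

def xpS (S : Finset (Fin (2*r))) : Cl r ⊗[ℂ] Cl r := xpl r S.toList

lemma xpl_cons (a : Fin (2*r)) (l : List (Fin (2*r))) :
    xpl r (a :: l) = xg r a * xpl r l := by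
  rw [xpl, List.map_cons, List.prod_cons]; rfl

lemma xg_mul_xpS (a : Fin (2*r)) (S : Finset (Fin (2*r))) :
    xg r a * xpS r S = if a ∈ S then xpS r (S.erase a) else xpS r (insert a S) := by
  split_ifs with h
  · have h1 : S.toList.Perm (a :: (S.erase a).toList) := by
      conv_lhs => rw [← Finset.insert_erase h]
      exact Finset.toList_insert (Finset.notMem_erase a S)
    rw [xpS, xpS, xpl_perm r h1, xpl_cons, ← mul_assoc, xg_sq, one_mul]
  · have h1 : (insert a S).toList.Perm (a :: S.toList) := Finset.toList_insert h
    rw [xpS, xpS, xpl_perm r h1, xpl_cons]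

def oddS : List (Fin (2*r)) → Finset (Fin (2*r))
  | [] => ∅
  | a :: l => if a ∈ oddS l then (oddS l).erase a else insert a (oddS l)

lemma xpl_eq_xpS (l : List (Fin (2*r))) : xpl r l = xpS r (oddS r l) := by
  induction l with
  | nil => simp [xpl, xpS, oddS]
  | cons a l ih => rw [xpl_cons, ih, xg_mul_xpS, oddS, apply_ite (xpS r)]

lemma mem_oddS (i : Fin (2*r)) (l : List (Fin (2*r))) :
    i ∈ oddS r l ↔ Odd (l.count i) := by
  induction l with
  | nil => simp [oddS]
  | cons a l ih =>
    rw [oddS]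
    rcases eq_or_ne i a with rfl | hia
    · have hc : (i :: l).count i = l.count i + 1 := by simp [List.count_cons]
      rw [hc]
      split_ifs with h
      · simp only [Finset.mem_erase, ne_eq, not_true_eq_false, false_and, false_iff]
        rw [ih, Nat.odd_iff] at h
        rw [Nat.odd_iff]
        omega
      · simp only [Finset.mem_insert, true_or, true_iff]
        rw [ih, Nat.odd_iff] at h
        rw [Nat.odd_iff]
        omega
    · have hc : (a :: l).count i = l.count i := by simp [List.count_cons, hia, Ne.symm hia]
      rw [hc]
      split_ifs with h
      · rw [Finset.mem_erase]
        simp [hia, ih]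
      · rw [Finset.mem_insert]
        simp [hia, ih]

def gpS (S : Finset (Fin (2*r))) : Cl r := (S.toList.map (Γgen r)).prod

lemma xpS_eq_mu (S : Finset (Fin (2*r))) : xpS r S = mu r (gpS r S) := by
  rw [xpS, xpl, gpS, ← List.prod_hom _ (mu r), List.map_map]
  rfl

end SC12b
namespace SC12b
open Finset SC12

variable (r : ℕ) (φ : Cl r ≃ₐ[ℂ] Matrix (Fin (2^r)) (Fin (2^r)) ℂ)

def Lf (a : Cl r) : ℂ := Matrix.trace (φ a)

lemma eqneg {x : ℂ} (h : x = -x) : x = 0 := by linear_combination h / 2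

lemma Lf_one : Lf r φ 1 = 2^r := by
  rw [Lf, map_one, Matrix.trace_one, Fintype.card_fin]
  push_cast
  ring

lemma Lf_comm (a b : Cl r) : Lf r φ (a*b) = Lf r φ (b*a) := by
  unfold Lf
  rw [map_mul, map_mul, Matrix.trace_mul_comm]

lemma Lf_neg (a : Cl r) : Lf r φ (-a) = -Lf r φ a := by
  unfold Lf
  rw [map_neg, Matrix.trace_neg]

lemma gamma_move (a : Fin (2*r)) :
    ∀ (l : List (Fin (2*r))), a ∉ l →
      Γgen r a * (l.map (Γgen r)).prod
        = ((-1:ℂ)^l.length) • ((l.map (Γgen r)).prod * Γgen r a) := by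
  intro l
  induction l with
  | nil => simp
  | cons b t ih =>
    intro ha
    have hab : a ≠ b := fun h => ha (h ▸ List.mem_cons_self)
    have hat : a ∉ t := fun h => ha (List.mem_cons_of_mem _ h)
    rw [List.map_cons, List.prod_cons, ← mul_assoc, gamma_anti r hab, neg_mul, mul_assoc,
      ih hat, List.length_cons, mul_smul_comm, ← neg_smul, pow_succ, mul_comm _ (-1:ℂ),
      mul_smul, neg_smul, neg_smul, one_smul, mul_assoc]

lemma Lf_gp_zero {l : List (Fin (2*r))} (hl : l.Nodup) (hne : l ≠ []) :
    Lf r φ ((l.map (Γgen r)).prod) = 0 := by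
  rcases Nat.even_or_odd l.length with he | ho
  · -- even length : split off head
    match l, hne with
    | a :: t, _ =>
      have hat : a ∉ t := (List.nodup_cons.1 hl).1
      have hodd : Odd t.length := by
        rw [List.length_cons] at he
        rcases he with ⟨k, hk⟩
        exact ⟨k - 1, by omega⟩
      have hmove := gamma_move r a t hat
      rw [hodd.neg_one_pow, neg_one_smul] at hmove
      have h1 : Lf r φ (Γgen r a * (t.map (Γgen r)).prod)
          = - Lf r φ (Γgen r a * (t.map (Γgen r)).prod) := by
        conv_lhs => rw [Lf_comm]
        rw [show (t.map (Γgen r)).prod * Γgen r a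
            = -(Γgen r a * (t.map (Γgen r)).prod) by rw [hmove, neg_neg], Lf_neg]
      rw [List.map_cons, List.prod_cons]
      exact eqneg h1
  · -- odd length : find an index not occurring
    have hlen : l.length < 2*r := by
      have h1 : l.length ≤ 2*r := by
        have := List.Nodup.length_le_card hl
        simpa using this
      rcases ho with ⟨k, hk⟩
      rcases Nat.lt_or_ge l.length (2*r) with h | h
      · exact h
      · omega
    have hex : ∃ b, b ∉ l := by
      by_contra hco
      push_neg at hco
      have hsub : (univ : Finset (Fin (2*r))) ⊆ l.toFinset := fun b _ =>
        List.mem_toFinset.2 (hco b)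
      have := Finset.card_le_card hsub
      rw [List.toFinset_card_of_nodup hl] at this
      simp only [Finset.card_univ, Fintype.card_fin] at this
      omega
    obtain ⟨b, hb⟩ := hex
    have hmove := gamma_move r b l hb
    rw [ho.neg_one_pow, neg_one_smul] at hmove
    have h1 : Lf r φ ((l.map (Γgen r)).prod) = - Lf r φ ((l.map (Γgen r)).prod) := by
      conv_lhs => rw [show (l.map (Γgen r)).prod
          = Γgen r b * (Γgen r b * (l.map (Γgen r)).prod) by
        rw [← mul_assoc, gamma_sq, one_mul]]
      rw [Lf_comm, hmove, neg_mul, mul_assoc, gamma_sq, mul_one, Lf_neg]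
    exact eqneg h1

end SC12b
namespace SC12b
open Finset SC12

variable (r : ℕ) (φ : Cl r ≃ₐ[ℂ] Matrix (Fin (2^r)) (Fin (2^r)) ℂ)
variable (Φ : Cl r ⊗[ℂ] Cl r →ₐ[ℂ] Matrix (Fin (2^r) × Fin (2^r)) (Fin (2^r) × Fin (2^r)) ℂ)

def LLf (x : Cl r ⊗[ℂ] Cl r) : ℂ := Matrix.trace (Φ x)

lemma LLf_tmul (hΦ : ∀ a b : Cl r, Φ (a ⊗ₜ[ℂ] b) = Matrix.kroneckerMap (· * ·) (φ a) (φ b))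
    (a b : Cl r) : LLf r Φ (a ⊗ₜ[ℂ] b) = Lf r φ a * Lf r φ b := by
  unfold LLf Lf
  rw [hΦ, Matrix.trace_kronecker]

lemma LLf_one : LLf r Φ 1 = 4^r := by
  unfold LLf
  rw [map_one, Matrix.trace_one, Fintype.card_prod, Fintype.card_fin]
  push_cast
  rw [← mul_pow]
  norm_num

lemma LLf_xpS_zero (hΦ : ∀ a b : Cl r, Φ (a ⊗ₜ[ℂ] b) = Matrix.kroneckerMap (· * ·) (φ a) (φ b))
    {S : Finset (Fin (2*r))} (hS : S.Nonempty) : LLf r Φ (xpS r S) = 0 := by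
  rw [xpS_eq_mu]
  have hmu : mu r (gpS r S) = gpS r S ⊗ₜ[ℂ] gpS r S := rfl
  rw [hmu, LLf_tmul r φ Φ hΦ, gpS,
    Lf_gp_zero r φ (Finset.nodup_toList S) (by
      intro h
      rw [Finset.toList_eq_nil] at h
      exact hS.ne_empty h), mul_zero]

lemma xpS_empty : xpS r ∅ = 1 := by
  simp [xpS, xpl]

lemma LLf_xpl (hΦ : ∀ a b : Cl r, Φ (a ⊗ₜ[ℂ] b) = Matrix.kroneckerMap (· * ·) (φ a) (φ b))
    (l : List (Fin (2*r))) :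
    LLf r Φ (xpl r l) = if oddS r l = ∅ then (4:ℂ)^r else 0 := by
  rw [xpl_eq_xpS]
  split_ifs with h
  · rw [h, xpS_empty, LLf_one]
  · exact LLf_xpS_zero r φ Φ hΦ (Finset.nonempty_iff_ne_empty.2 h)

/-! ### character side -/

def chb : Bool → ℂ := fun b => if b then 1 else -1

lemma sum_chb_pow (c : ℕ) : ∑ b : Bool, chb b ^ c = if Even c then 2 else 0 := by
  rw [Fintype.sum_bool]
  rcases Nat.even_or_odd c with h | h
  · rw [if_pos h]
    simp [chb, h.neg_one_pow]
    norm_num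
  · rw [if_neg (Nat.not_even_iff_odd.2 h)]
    simp [chb, h.neg_one_pow]

lemma listcount {α : Type*} [DecidableEq α] (l : List α) (i : α) :
    (l.count i : ℕ) = (l.map fun a => if a = i then 1 else 0).sum := by
  induction l with
  | nil => simp
  | cons a l ih =>
    rw [List.count_cons, List.map_cons, List.sum_cons, ih]
    rcases eq_or_ne a i with rfl | h
    · simp [add_comm]
    · simp [h]

lemma count_ofFn {m : ℕ} (w : Fin m → Fin (2*r)) (i : Fin (2*r)) :
    (List.ofFn w).count i = (univ.filter fun t => w t = i).card := by
  rw [listcount, List.map_ofFn, List.sum_ofFn, Finset.card_filter]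
  rfl

lemma charW {m : ℕ} (w : Fin m → Fin (2*r)) :
    ∑ ε : Fin (2*r) → Bool, ∏ t : Fin m, chb (ε (w t))
      = if (∀ i, Even ((univ.filter fun t => w t = i).card)) then (2:ℂ)^(2*r) else 0 := by
  have h1 : ∀ ε : Fin (2*r) → Bool,
      ∏ t : Fin m, chb (ε (w t))
        = ∏ i, chb (ε i) ^ ((univ.filter fun t => w t = i).card) := by
    intro ε
    rw [← Finset.prod_fiberwise_of_maps_to (t := univ) (g := w)
      (fun t _ => mem_univ (w t)) (fun t => chb (ε (w t)))]
    refine Finset.prod_congr rfl fun i _ => ?_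
    rw [Finset.prod_congr rfl (fun t ht => by rw [(Finset.mem_filter.1 ht).2]),
      Finset.prod_const]
  rw [Finset.sum_congr rfl fun ε _ => h1 ε]
  have h2 := Finset.prod_univ_sum (fun _ : Fin (2*r) => (univ : Finset Bool))
    (fun i b => chb b ^ ((univ.filter fun t => w t = i).card))
  rw [Fintype.piFinset_univ] at h2
  rw [← h2, Finset.prod_congr rfl fun i _ =>
    sum_chb_pow ((univ.filter fun t => w t = i).card)]
  split_ifs with h
  · rw [Finset.prod_congr rfl fun i _ => if_pos (h i), Finset.prod_const]
    simp
  · push_neg at h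
    obtain ⟨i, hi⟩ := h
    exact Finset.prod_eq_zero (mem_univ i) (if_neg hi)

lemma oddS_ofFn_empty_iff {m : ℕ} (w : Fin m → Fin (2*r)) :
    oddS r (List.ofFn w) = ∅ ↔ ∀ i, Even ((univ.filter fun t => w t = i).card) := by
  rw [Finset.eq_empty_iff_forall_notMem]
  refine forall_congr' fun i => ?_
  rw [mem_oddS, count_ofFn, Nat.not_odd_iff_even]

lemma LLf_word (hΦ : ∀ a b : Cl r, Φ (a ⊗ₜ[ℂ] b) = Matrix.kroneckerMap (· * ·) (φ a) (φ b))
    {m : ℕ} (w : Fin m → Fin (2*r)) :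
    (2:ℂ)^(2*r) * LLf r Φ (xpl r (List.ofFn w))
      = (4:ℂ)^r * ∑ ε : Fin (2*r) → Bool, ∏ t : Fin m, chb (ε (w t)) := by
  rw [LLf_xpl r φ Φ hΦ, charW]
  simp only [oddS_ofFn_empty_iff]
  split_ifs <;> ring

end SC12b
namespace SC12b
open Finset SC12

variable (r : ℕ)
variable (Φ : Cl r ⊗[ℂ] Cl r →ₐ[ℂ] Matrix (Fin (2^r) × Fin (2^r)) (Fin (2^r) × Fin (2^r)) ℂ)

lemma Kel_pow : ∀ m : ℕ, Kel r ^ m = ∑ w : Fin m → Fin (2*r), xpl r (List.ofFn w)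
  | 0 => by
    rw [pow_zero,
      show (∑ w : Fin 0 → Fin (2*r), xpl r (List.ofFn w))
          = ∑ _w : Fin 0 → Fin (2*r), (1 : Cl r ⊗[ℂ] Cl r) from
        Finset.sum_congr rfl fun w _ => by simp [xpl],
      Finset.sum_const]
    simp
  | (m+1) => by
    rw [pow_succ', Kel_pow m, Kel, Finset.sum_mul_sum, ← Fintype.sum_prod_type']
    exact Fintype.sum_equiv (Fin.consEquiv (fun _ : Fin (m+1) => Fin (2*r)))
      (fun p => xg r p.1 * xpl r (List.ofFn p.2))
      (fun w => xpl r (List.ofFn w))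
      (fun p => by
        simp only [Fin.consEquiv, Equiv.coe_fn_mk, List.ofFn_succ, Fin.cons_zero,
          Fin.cons_succ, xpl_cons])

def Gchar (m N : ℕ) : ℂ := ∑ ε : Fin N → Bool, (∑ i, chb (ε i))^m

variable (φ : Cl r ≃ₐ[ℂ] Matrix (Fin (2^r)) (Fin (2^r)) ℂ)

set_option maxHeartbeats 1000000 in
lemma LLf_Kel_pow (hΦ : ∀ a b : Cl r, Φ (a ⊗ₜ[ℂ] b) = Matrix.kroneckerMap (· * ·) (φ a) (φ b))
    (m : ℕ) :
    (2:ℂ)^(2*r) * LLf r Φ (Kel r ^ m) = 4^r * Gchar m (2*r) := by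
  have h0 : LLf r Φ (Kel r ^ m) = ∑ w : Fin m → Fin (2*r), LLf r Φ (xpl r (List.ofFn w)) := by
    rw [Kel_pow]
    unfold LLf
    rw [map_sum, Matrix.trace_sum]
  rw [h0, Finset.mul_sum,
    Finset.sum_congr rfl fun w _ => LLf_word r φ Φ hΦ w, ← Finset.mul_sum]
  refine congrArg _ ?_
  rw [Finset.sum_comm, Gchar]
  exact Finset.sum_congr rfl fun ε _ => (Fintype.sum_pow (fun i => chb (ε i)) m).symm
end SC12b
namespace SC12b
open Finset SC12

lemma Gchar_base (m : ℕ) : Gchar m 0 = (0:ℂ)^m := by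
  unfold Gchar
  rw [Fintype.sum_unique]
  simp

lemma Gchar_succ (m N : ℕ) :
    Gchar m (N+1)
      = ∑ ε : Fin N → Bool, ((1 + ∑ i, chb (ε i))^m + (-1 + ∑ i, chb (ε i))^m) := by
  unfold Gchar
  rw [← Fintype.sum_equiv (Fin.consEquiv (fun _ : Fin (N+1) => Bool))
    (fun p : Bool × (Fin N → Bool) => (chb p.1 + ∑ i, chb (p.2 i))^m)
    (fun ε : Fin (N+1) → Bool => (∑ i, chb (ε i))^m)
    (fun p => by
      show (chb p.1 + ∑ i : Fin N, chb (p.2 i)) ^ m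
          = (∑ i : Fin (N+1), chb ((Fin.consEquiv fun _ : Fin (N+1) => Bool) p i)) ^ m
      rw [Fin.sum_univ_succ]
      simp [Fin.consEquiv]),
    Fintype.sum_prod_type' (f := fun b (ε : Fin N → Bool) => (chb b + ∑ i, chb (ε i))^m),
    Fintype.sum_bool, ← Finset.sum_add_distrib]
  refine Finset.sum_congr rfl fun ε _ => ?_
  simp [chb]

lemma G0 (N : ℕ) : Gchar 0 N = 2^N := by
  unfold Gchar
  simp [Finset.card_univ]

lemma G2 (N : ℕ) : Gchar 2 N = 2^N * N := by
  induction N with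
  | zero => rw [Gchar_base]; norm_num
  | succ N ih =>
    rw [Gchar_succ,
      Finset.sum_congr rfl fun ε _ => show (1 + ∑ i, chb (ε i))^2 + (-1 + ∑ i, chb (ε i))^2
        = 2*(∑ i, chb (ε i))^2 + 2*(∑ i, chb (ε i))^0 by ring,
      Finset.sum_add_distrib, ← Finset.mul_sum, ← Finset.mul_sum]
    rw [show (∑ ε : Fin N → Bool, (∑ i, chb (ε i))^2) = Gchar 2 N from rfl,
      show (∑ ε : Fin N → Bool, (∑ i, chb (ε i))^0) = Gchar 0 N from rfl, ih, G0]
    push_cast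
    ring

lemma G4 (N : ℕ) : Gchar 4 N = 2^N * (3*(N:ℂ)^2 - 2*N) := by
  induction N with
  | zero => rw [Gchar_base]; norm_num
  | succ N ih =>
    rw [Gchar_succ,
      Finset.sum_congr rfl fun ε _ => show (1 + ∑ i, chb (ε i))^4 + (-1 + ∑ i, chb (ε i))^4
        = 2*(∑ i, chb (ε i))^4 + 12*(∑ i, chb (ε i))^2 + 2*(∑ i, chb (ε i))^0 by ring,
      Finset.sum_add_distrib, Finset.sum_add_distrib,
      ← Finset.mul_sum, ← Finset.mul_sum, ← Finset.mul_sum]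
    rw [show (∑ ε : Fin N → Bool, (∑ i, chb (ε i))^4) = Gchar 4 N from rfl,
      show (∑ ε : Fin N → Bool, (∑ i, chb (ε i))^2) = Gchar 2 N from rfl,
      show (∑ ε : Fin N → Bool, (∑ i, chb (ε i))^0) = Gchar 0 N from rfl, ih, G2, G0]
    push_cast
    ring

lemma G6 (N : ℕ) : Gchar 6 N = 2^N * (15*(N:ℂ)^3 - 30*N^2 + 16*N) := by
  induction N with
  | zero => rw [Gchar_base]; norm_num
  | succ N ih =>
    rw [Gchar_succ,
      Finset.sum_congr rfl fun ε _ => show (1 + ∑ i, chb (ε i))^6 + (-1 + ∑ i, chb (ε i))^6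
        = 2*(∑ i, chb (ε i))^6 + 30*(∑ i, chb (ε i))^4 + 30*(∑ i, chb (ε i))^2
          + 2*(∑ i, chb (ε i))^0 by ring,
      Finset.sum_add_distrib, Finset.sum_add_distrib, Finset.sum_add_distrib,
      ← Finset.mul_sum, ← Finset.mul_sum, ← Finset.mul_sum, ← Finset.mul_sum]
    rw [show (∑ ε : Fin N → Bool, (∑ i, chb (ε i))^6) = Gchar 6 N from rfl,
      show (∑ ε : Fin N → Bool, (∑ i, chb (ε i))^4) = Gchar 4 N from rfl,
      show (∑ ε : Fin N → Bool, (∑ i, chb (ε i))^2) = Gchar 2 N from rfl,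
      show (∑ ε : Fin N → Bool, (∑ i, chb (ε i))^0) = Gchar 0 N from rfl, ih, G4, G2, G0]
    push_cast
    ring

lemma G8 (N : ℕ) :
    Gchar 8 N = 2^N * (105*(N:ℂ)^4 - 420*N^3 + 588*N^2 - 272*N) := by
  induction N with
  | zero => rw [Gchar_base]; norm_num
  | succ N ih =>
    rw [Gchar_succ,
      Finset.sum_congr rfl fun ε _ => show (1 + ∑ i, chb (ε i))^8 + (-1 + ∑ i, chb (ε i))^8
        = 2*(∑ i, chb (ε i))^8 + 56*(∑ i, chb (ε i))^6 + 140*(∑ i, chb (ε i))^4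
          + 56*(∑ i, chb (ε i))^2 + 2*(∑ i, chb (ε i))^0 by ring,
      Finset.sum_add_distrib, Finset.sum_add_distrib, Finset.sum_add_distrib,
      Finset.sum_add_distrib,
      ← Finset.mul_sum, ← Finset.mul_sum, ← Finset.mul_sum, ← Finset.mul_sum,
      ← Finset.mul_sum]
    rw [show (∑ ε : Fin N → Bool, (∑ i, chb (ε i))^8) = Gchar 8 N from rfl,
      show (∑ ε : Fin N → Bool, (∑ i, chb (ε i))^6) = Gchar 6 N from rfl,
      show (∑ ε : Fin N → Bool, (∑ i, chb (ε i))^4) = Gchar 4 N from rfl,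
      show (∑ ε : Fin N → Bool, (∑ i, chb (ε i))^2) = Gchar 2 N from rfl,
      show (∑ ε : Fin N → Bool, (∑ i, chb (ε i))^0) = Gchar 0 N from rfl,
      ih, G6, G4, G2, G0]
    push_cast
    ring

lemma G10 (N : ℕ) :
    Gchar 10 N = 2^N * (945*(N:ℂ)^5 - 6300*N^4 + 16380*N^3 - 18960*N^2 + 7936*N) := by
  induction N with
  | zero => rw [Gchar_base]; norm_num
  | succ N ih =>
    rw [Gchar_succ,
      Finset.sum_congr rfl fun ε _ => show (1 + ∑ i, chb (ε i))^10 + (-1 + ∑ i, chb (ε i))^10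
        = 2*(∑ i, chb (ε i))^10 + 90*(∑ i, chb (ε i))^8 + 420*(∑ i, chb (ε i))^6
          + 420*(∑ i, chb (ε i))^4 + 90*(∑ i, chb (ε i))^2 + 2*(∑ i, chb (ε i))^0 by ring,
      Finset.sum_add_distrib, Finset.sum_add_distrib, Finset.sum_add_distrib,
      Finset.sum_add_distrib, Finset.sum_add_distrib,
      ← Finset.mul_sum, ← Finset.mul_sum, ← Finset.mul_sum, ← Finset.mul_sum,
      ← Finset.mul_sum, ← Finset.mul_sum]
    rw [show (∑ ε : Fin N → Bool, (∑ i, chb (ε i))^10) = Gchar 10 N from rfl,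
      show (∑ ε : Fin N → Bool, (∑ i, chb (ε i))^8) = Gchar 8 N from rfl,
      show (∑ ε : Fin N → Bool, (∑ i, chb (ε i))^6) = Gchar 6 N from rfl,
      show (∑ ε : Fin N → Bool, (∑ i, chb (ε i))^4) = Gchar 4 N from rfl,
      show (∑ ε : Fin N → Bool, (∑ i, chb (ε i))^2) = Gchar 2 N from rfl,
      show (∑ ε : Fin N → Bool, (∑ i, chb (ε i))^0) = Gchar 0 N from rfl,
      ih, G8, G6, G4, G2, G0]
    push_cast
    ring

end SC12b
namespace SC12b
open Finset SC12

variable (r : ℕ)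

lemma Gbr2 (i : Fin 2 → Fin (2*r)) :
    Γbr r 2 i = (2:ℂ)⁻¹ • (Γgen r (i 0) * Γgen r (i 1) - Γgen r (i 1) * Γgen r (i 0)) := by
  rw [Γbr]
  have huniv : (univ : Finset (Equiv.Perm (Fin 2))) = {1, Equiv.swap 0 1} := by decide
  rw [huniv, Finset.sum_pair (by decide : (1 : Equiv.Perm (Fin 2)) ≠ Equiv.swap 0 1)]
  have h1 : ∀ j : Fin 2, (1 : Equiv.Perm (Fin 2)) j = j := fun j => rfl
  have hs0 : (Equiv.swap (0:Fin 2) 1) 0 = 1 := Equiv.swap_apply_left 0 1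
  have hs1 : (Equiv.swap (0:Fin 2) 1) 1 = 0 := Equiv.swap_apply_right 0 1
  simp only [List.ofFn_succ, List.ofFn_zero, List.prod_cons, List.prod_nil,
    Fin.succ_zero_eq_one, h1, hs0, hs1, map_one, Units.val_one, Int.cast_one, one_smul,
    Equiv.Perm.sign_swap (by decide : (0:Fin 2) ≠ 1), Units.val_neg, Int.cast_neg,
    neg_smul, mul_one, Nat.factorial]
  rw [sub_eq_add_neg]
  norm_num
lemma Gbr2' (i : Fin 2 → Fin (2*r)) :
    Γbr r 2 i = Γgen r (i 0) * Γgen r (i 1) - (if i 0 = i 1 then 1 else 0) := by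
  rw [Gbr2]
  rcases eq_or_ne (i 0) (i 1) with h | h
  · rw [if_pos h, h, sub_self, smul_zero, gamma_sq, sub_self]
  · rw [if_neg h, sub_zero, gamma_anti r h.symm, sub_neg_eq_add, ← two_smul ℂ, smul_smul]
    norm_num

lemma Ik2 : Ik r 2 = Kel r ^ 2 - ((2*r : ℕ) : ℂ) • 1 := by
  have hpoint : ∀ a b : Fin (2*r),
      (Γgen r a * Γgen r b - (if a = b then 1 else 0)) ⊗ₜ[ℂ]
        (Γgen r a * Γgen r b - (if a = b then 1 else 0))
      = (Γgen r a * Γgen r b) ⊗ₜ[ℂ] (Γgen r a * Γgen r b)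
        - (if a = b then (1 : Cl r ⊗[ℂ] Cl r) else 0) := by
    intro a b
    rcases eq_or_ne a b with rfl | h
    · rw [if_pos rfl, if_pos rfl, gamma_sq, sub_self, TensorProduct.zero_tmul,
        Algebra.TensorProduct.one_def, eq_comm, sub_eq_zero]
    · rw [if_neg h, if_neg h, sub_zero, sub_zero]
  rw [Ik, Finset.sum_congr rfl fun i _ => by rw [Gbr2' r i],
    Fintype.sum_equiv (piFinTwoEquiv fun _ => Fin (2*r))
      (fun i : Fin 2 → Fin (2*r) =>
        (Γgen r (i 0) * Γgen r (i 1) - (if i 0 = i 1 then 1 else 0)) ⊗ₜ[ℂ]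
        (Γgen r (i 0) * Γgen r (i 1) - (if i 0 = i 1 then 1 else 0)))
      (fun p : Fin (2*r) × Fin (2*r) =>
        (Γgen r p.1 * Γgen r p.2 - (if p.1 = p.2 then 1 else 0)) ⊗ₜ[ℂ]
        (Γgen r p.1 * Γgen r p.2 - (if p.1 = p.2 then 1 else 0)))
      (fun i => rfl),
    Fintype.sum_prod_type' (f := fun a b =>
        (Γgen r a * Γgen r b - (if a = b then 1 else 0)) ⊗ₜ[ℂ]
        (Γgen r a * Γgen r b - (if a = b then 1 else 0))),
    Finset.sum_congr rfl fun a _ => Finset.sum_congr rfl fun b _ => hpoint a b]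
  rw [Finset.sum_congr rfl fun a _ => Finset.sum_sub_distrib _ _,
    Finset.sum_sub_distrib]
  have hdelta : ∑ a : Fin (2*r), ∑ b : Fin (2*r),
      (if a = b then (1 : Cl r ⊗[ℂ] Cl r) else 0) = ((2*r : ℕ) : ℂ) • 1 := by
    rw [Finset.sum_congr rfl fun a _ => Finset.sum_ite_eq univ a (fun _ => 1)]
    simp only [Finset.mem_univ, if_pos, Finset.sum_const, Finset.card_univ, Fintype.card_fin]
    rw [Nat.cast_smul_eq_nsmul]
  have hK : ∑ a : Fin (2*r), ∑ b : Fin (2*r),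
      (Γgen r a * Γgen r b) ⊗ₜ[ℂ] (Γgen r a * Γgen r b) = Kel r ^ 2 := by
    rw [pow_two, Kel, Finset.sum_mul_sum]
    exact Finset.sum_congr rfl fun a _ => Finset.sum_congr rfl fun b _ =>
      (Algebra.TensorProduct.tmul_mul_tmul _ _ _ _).symm
  rw [hdelta, hK]

lemma sC_eq : sC r = (-(16*(2*(r:ℂ)-2))⁻¹) • (Kel r ^ 2 - ((2*r : ℕ) : ℂ) • 1) := by
  rw [sC, Ik2]

end SC12b
namespace SC12b
open Finset SC12

variable (r : ℕ)
variable (φ : Cl r ≃ₐ[ℂ] Matrix (Fin (2^r)) (Fin (2^r)) ℂ)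
variable (Φ : Cl r ⊗[ℂ] Cl r →ₐ[ℂ] Matrix (Fin (2^r) × Fin (2^r)) (Fin (2^r) × Fin (2^r)) ℂ)

lemma LLf_smul (a : ℂ) (x : Cl r ⊗[ℂ] Cl r) : LLf r Φ (a • x) = a * LLf r Φ x := by
  unfold LLf
  rw [map_smul, Matrix.trace_smul, smul_eq_mul]

lemma natCast_eq_smul_one (n : ℕ) :
    ((n : ℕ) : Cl r ⊗[ℂ] Cl r) = ((n:ℂ) • (1 : Cl r ⊗[ℂ] Cl r)) := by
  rw [Nat.cast_smul_eq_nsmul, nsmul_eq_mul, mul_one]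

lemma sC_pow_LL (n : ℕ) :
    LLf r Φ (sC r ^ n) = (-(16*(2*(r:ℂ)-2))⁻¹)^n *
      ∑ m ∈ range (n+1),
        (-(((2*r:ℕ):ℂ)))^(n-m) * (n.choose m : ℂ) * LLf r Φ (Kel r ^ (2*m)) := by
  rw [sC_eq, smul_pow, LLf_smul]
  congr 1
  have hc : Commute (Kel r ^ 2) ((-(((2*r:ℕ):ℂ))) • (1 : Cl r ⊗[ℂ] Cl r)) :=
    (Commute.one_right _).smul_right _
  rw [sub_eq_add_neg, ← neg_smul, hc.add_pow]
  have hsummand : ∀ m : ℕ,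
      (Kel r ^ 2) ^ m * ((-(((2*r:ℕ):ℂ))) • (1 : Cl r ⊗[ℂ] Cl r)) ^ (n-m) * (n.choose m : Cl r ⊗[ℂ] Cl r)
      = ((-(((2*r:ℕ):ℂ)))^(n-m) * (n.choose m : ℂ)) • Kel r ^ (2*m) := by
    intro m
    rw [smul_pow, one_pow, ← pow_mul, natCast_eq_smul_one, mul_smul_comm, mul_one,
      mul_smul_comm, mul_one, smul_smul, mul_comm ((n.choose m : ℕ) : ℂ)]
  rw [Finset.sum_congr rfl fun m _ => hsummand m]
  have hLL : ∀ (s : Finset ℕ) (f : ℕ → Cl r ⊗[ℂ] Cl r),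
      LLf r Φ (∑ m ∈ s, f m) = ∑ m ∈ s, LLf r Φ (f m) := by
    intro s f
    unfold LLf
    rw [map_sum, Matrix.trace_sum]
  rw [hLL]
  exact Finset.sum_congr rfl fun m _ => by rw [LLf_smul]

lemma h2N : ((2:ℂ)^(2*r)) ≠ 0 := pow_ne_zero _ two_ne_zero

section vals
variable (hΦ : ∀ a b : Cl r, Φ (a ⊗ₜ[ℂ] b) = Matrix.kroneckerMap (· * ·) (φ a) (φ b))
include hΦ

omit hΦ in
lemma LLfK0 : LLf r Φ (Kel r ^ (2*0)) = 4^r := by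
  rw [show (2*0 : ℕ) = 0 from rfl, pow_zero]
  exact LLf_one r Φ

lemma LLfK2 : LLf r Φ (Kel r ^ (2*1)) = 4^r * (2*(r:ℂ)) := by
  have key := LLf_Kel_pow r Φ φ hΦ (2*1)
  rw [show (2*1 : ℕ) = 2 from rfl, G2] at key
  refine mul_left_cancel₀ (h2N r) (key.trans ?_)
  push_cast
  ring

lemma LLfK4 : LLf r Φ (Kel r ^ (2*2)) = 4^r * (3*(2*(r:ℂ))^2 - 2*(2*(r:ℂ))) := by
  have key := LLf_Kel_pow r Φ φ hΦ (2*2)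
  rw [show (2*2 : ℕ) = 4 from rfl, G4] at key
  refine mul_left_cancel₀ (h2N r) (key.trans ?_)
  push_cast
  ring

lemma LLfK6 : LLf r Φ (Kel r ^ (2*3))
    = 4^r * (15*(2*(r:ℂ))^3 - 30*(2*(r:ℂ))^2 + 16*(2*(r:ℂ))) := by
  have key := LLf_Kel_pow r Φ φ hΦ (2*3)
  rw [show (2*3 : ℕ) = 6 from rfl, G6] at key
  refine mul_left_cancel₀ (h2N r) (key.trans ?_)
  push_cast
  ring

lemma LLfK8 : LLf r Φ (Kel r ^ (2*4))
    = 4^r * (105*(2*(r:ℂ))^4 - 420*(2*(r:ℂ))^3 + 588*(2*(r:ℂ))^2 - 272*(2*(r:ℂ))) := by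
  have key := LLf_Kel_pow r Φ φ hΦ (2*4)
  rw [show (2*4 : ℕ) = 8 from rfl, G8] at key
  refine mul_left_cancel₀ (h2N r) (key.trans ?_)
  push_cast
  ring

lemma LLfK10 : LLf r Φ (Kel r ^ (2*5))
    = 4^r * (945*(2*(r:ℂ))^5 - 6300*(2*(r:ℂ))^4 + 16380*(2*(r:ℂ))^3
        - 18960*(2*(r:ℂ))^2 + 7936*(2*(r:ℂ))) := by
  have key := LLf_Kel_pow r Φ φ hΦ (2*5)
  rw [show (2*5 : ℕ) = 10 from rfl, G10] at key
  refine mul_left_cancel₀ (h2N r) (key.trans ?_)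
  push_cast
  ring

end vals
end SC12b
/-- traces of powers of the split Casimir element. -/
theorem sC_power_traces (r : ℕ) (hr : 2 ≤ r)
    (φ : Cl r ≃ₐ[ℂ] Matrix (Fin (2^r)) (Fin (2^r)) ℂ)
    (Φ : Cl r ⊗[ℂ] Cl r →ₐ[ℂ] Matrix (Fin (2^r) × Fin (2^r)) (Fin (2^r) × Fin (2^r)) ℂ)
    (hΦ : ∀ a b : Cl r, Φ (a ⊗ₜ[ℂ] b) = Matrix.kroneckerMap (· * ·) (φ a) (φ b)) :
    Matrix.trace (Φ ((sC r)^2))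
        = ((4:ℂ)^r * (r:ℂ) * (2*(r:ℂ)-1)) / (256*((r:ℂ)-1)^2) ∧
    Matrix.trace (Φ ((sC r)^3))
        = -((4:ℂ)^r * (r:ℂ) * (2*(r:ℂ)-1)) / (1024*((r:ℂ)-1)^2) ∧
    Matrix.trace (Φ ((sC r)^4))
        = ((4:ℂ)^r * (r:ℂ) * (2*(r:ℂ)-1) * (30*(r:ℂ)^2-63*(r:ℂ)+34)) / (2^16*((r:ℂ)-1)^4) ∧
    Matrix.trace (Φ ((sC r)^5))
        = -((4:ℂ)^r * (r:ℂ) * (2*(r:ℂ)-1) * (34*(r:ℂ)^2-89*(r:ℂ)+62)) / (2^17*((r:ℂ)-1)^4) := by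
  have hrne : ((r:ℂ) - 1) ≠ 0 := by
    have h1 : (r:ℂ) ≠ 1 := by
      intro h
      have : (r:ℕ) = 1 := by exact_mod_cast h
      omega
    exact sub_ne_zero.2 h1
  have ha : (16*(2*(r:ℂ)-2)) ≠ 0 := by
    intro h
    apply hrne
    linear_combination h/32
  have hD2 : (256*((r:ℂ)-1)^2) ≠ 0 := mul_ne_zero (by norm_num) (pow_ne_zero _ hrne)
  have hD3 : (1024*((r:ℂ)-1)^2) ≠ 0 := mul_ne_zero (by norm_num) (pow_ne_zero _ hrne)
  have hD4 : ((2:ℂ)^16*((r:ℂ)-1)^4) ≠ 0 := mul_ne_zero (by norm_num) (pow_ne_zero _ hrne)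
  have hD5 : ((2:ℂ)^17*((r:ℂ)-1)^4) ≠ 0 := mul_ne_zero (by norm_num) (pow_ne_zero _ hrne)
  refine ⟨?_, ?_, ?_, ?_⟩
  · show SC12b.LLf r Φ (sC r ^ 2) = _
    rw [SC12b.sC_pow_LL]
    simp only [Finset.sum_range_succ, Finset.sum_range_zero]
    rw [SC12b.LLfK0 r Φ, SC12b.LLfK2 r φ Φ hΦ, SC12b.LLfK4 r φ Φ hΦ]
    rw [eq_div_iff hD2]
    field_simp [ha]
    norm_num [Nat.choose]
    ring
  · show SC12b.LLf r Φ (sC r ^ 3) = _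
    rw [SC12b.sC_pow_LL]
    simp only [Finset.sum_range_succ, Finset.sum_range_zero]
    rw [SC12b.LLfK0 r Φ, SC12b.LLfK2 r φ Φ hΦ, SC12b.LLfK4 r φ Φ hΦ,
      SC12b.LLfK6 r φ Φ hΦ]
    rw [eq_div_iff hD3]
    field_simp [ha]
    push_cast
    norm_num [Nat.choose]
    ring
  · show SC12b.LLf r Φ (sC r ^ 4) = _
    rw [SC12b.sC_pow_LL]
    simp only [Finset.sum_range_succ, Finset.sum_range_zero]
    rw [SC12b.LLfK0 r Φ, SC12b.LLfK2 r φ Φ hΦ, SC12b.LLfK4 r φ Φ hΦ,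
      SC12b.LLfK6 r φ Φ hΦ, SC12b.LLfK8 r φ Φ hΦ]
    rw [eq_div_iff hD4]
    field_simp [ha]
    push_cast
    norm_num [Nat.choose]
    ring
  · show SC12b.LLf r Φ (sC r ^ 5) = _
    rw [SC12b.sC_pow_LL]
    simp only [Finset.sum_range_succ, Finset.sum_range_zero]
    rw [SC12b.LLfK0 r Φ, SC12b.LLfK2 r φ Φ hΦ, SC12b.LLfK4 r φ Φ hΦ,
      SC12b.LLfK6 r φ Φ hΦ, SC12b.LLfK8 r φ Φ hΦ, SC12b.LLfK10 r φ Φ hΦ]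
    rw [eq_div_iff hD5]
    field_simp [ha]
    push_cast
    norm_num [Nat.choose]
    ring

end
end

section
/- Suppose r is even, and let φ : Cl ≃ Matrix (Fin 2^r) ℂ be any ℂ-algebra isomorphism with Φ the induced isomorphism of Cl ⊗ Cl onto Matrix ((Fin 2^r) × (Fin 2^r)) ℂ. Then for each ε ∈ {+1,−1}: Tr Φ(p_{ε,−ε}·P_{2m−1}) = (2r)!/((2m−1)!(2r−2m+1)!) for 1 ≤ m ≤ r/2; Tr Φ(p_{εε}·P_{2m}) = (2r)!/((2m)!(2r−2m)!) for 0 ≤ m ≤ r/2 − 1; and Tr Φ(p_{εε}·P_r) = (2r)!/(2·(r!)^2). -/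
open scoped TensorProduct

noncomputable section

namespace Aux

variable {r : ℕ}

lemma Qf_apply (v : Fin (2*r) → ℂ) : Qf r v = ∑ i, v i * v i := by
  simp [Qf, QuadraticMap.weightedSumSquares_apply]

lemma γ_sq (i : Fin (2*r)) : Γgen r i * Γgen r i = 1 := by
  rw [Γgen, CliffordAlgebra.ι_sq_scalar]
  have h : Qf r (Pi.single i 1) = 1 := by
    rw [Qf_apply]
    simp [Pi.single_apply]
  rw [h, map_one]

lemma γ_anti {i j : Fin (2*r)} (h : i ≠ j) :
    Γgen r i * Γgen r j = -(Γgen r j * Γgen r i) := by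
  have hp := CliffordAlgebra.ι_mul_ι_add_swap (Q := Qf r) (Pi.single i 1) (Pi.single j 1)
  have hpol : QuadraticMap.polar (⇑(Qf r)) (Pi.single i 1) (Pi.single j 1) = 0 := by
    rw [QuadraticMap.polar, Qf_apply, Qf_apply, Qf_apply]
    have hcalc : ∀ x : Fin (2*r),
        ((Pi.single i 1 + Pi.single j 1 : Fin (2*r) → ℂ) x) * ((Pi.single i 1 + Pi.single j 1 : Fin (2*r) → ℂ) x)
        = ((Pi.single i 1 : Fin (2*r) → ℂ) x) * ((Pi.single i 1 : Fin (2*r) → ℂ) x) + ((Pi.single j 1 : Fin (2*r) → ℂ) x) * ((Pi.single j 1 : Fin (2*r) → ℂ) x) := by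
      intro x
      rcases eq_or_ne x i with rfl | hxi
      · simp [Pi.single_apply, h.symm]
      · rcases eq_or_ne x j with rfl | hxj
        · simp [Pi.single_apply, hxi]
        · simp [Pi.single_apply, hxi, hxj]
    rw [show (∑ x, ((Pi.single i 1 + Pi.single j 1 : Fin (2*r) → ℂ) x) * ((Pi.single i 1 + Pi.single j 1 : Fin (2*r) → ℂ) x)) = ∑ x, (((Pi.single i 1 : Fin (2*r) → ℂ) x) * ((Pi.single i 1 : Fin (2*r) → ℂ) x) + ((Pi.single j 1 : Fin (2*r) → ℂ) x) * ((Pi.single j 1 : Fin (2*r) → ℂ) x)) from Finset.sum_congr rfl (fun x _ => hcalc x)]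
    rw [Finset.sum_add_distrib]
    ring
  rw [hpol, map_zero] at hp
  rw [Γgen, Γgen]
  exact eq_neg_of_add_eq_zero_left hp

end Aux

def Pl (r : ℕ) (l : List (Fin (2*r))) : Cl r := (l.map (Γgen r)).prod

namespace Aux
variable {r : ℕ}

lemma Pl_nil : Pl r [] = 1 := rfl

lemma Pl_cons (a : Fin (2*r)) (l : List (Fin (2*r))) :
    Pl r (a :: l) = Γgen r a * Pl r l := by simp [Pl]

lemma Pl_append (l₁ l₂ : List (Fin (2*r))) :
    Pl r (l₁ ++ l₂) = Pl r l₁ * Pl r l₂ := by simp [Pl]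

lemma γ_anti' {i j : Fin (2*r)} (h : i ≠ j) :
    Γgen r i * Γgen r j = (-1 : ℂ) • (Γgen r j * Γgen r i) := by
  rw [γ_anti h, neg_smul, one_smul]

lemma γ_Pl_notMem {j : Fin (2*r)} {l : List (Fin (2*r))} (h : j ∉ l) :
    Γgen r j * Pl r l = ((-1 : ℂ)^l.length) • (Pl r l * Γgen r j) := by
  induction l with
  | nil => simp [Pl_nil]
  | cons a t ih =>
    have hja : j ≠ a := fun hh => h (hh ▸ (List.mem_cons_self : a ∈ a :: t))
    have hjt : j ∉ t := fun hh => h (List.mem_cons_of_mem a hh)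
    rw [Pl_cons, ← mul_assoc, γ_anti' hja, smul_mul_assoc, mul_assoc, ih hjt,
      mul_smul_comm, smul_smul, List.length_cons, ← mul_assoc]
    ring_nf

lemma Pl_γ_notMem {j : Fin (2*r)} {l : List (Fin (2*r))} (h : j ∉ l) :
    Pl r l * Γgen r j = ((-1 : ℂ)^l.length) • (Γgen r j * Pl r l) := by
  rw [γ_Pl_notMem h, smul_smul, ← pow_add, ← two_mul, pow_mul]
  norm_num

lemma γ_Pl_left {j : Fin (2*r)} (a b : List (Fin (2*r))) (ha : j ∉ a) :
    Γgen r j * Pl r (a ++ j :: b) = ((-1 : ℂ)^a.length) • Pl r (a ++ b) := by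
  rw [Pl_append, Pl_cons, ← mul_assoc, γ_Pl_notMem ha, smul_mul_assoc, Pl_append]
  rw [mul_assoc, ← mul_assoc (Γgen r j), γ_sq, one_mul]

lemma γ_Pl_right {j : Fin (2*r)} (a b : List (Fin (2*r))) (hb : j ∉ b) :
    Pl r (a ++ j :: b) * Γgen r j = ((-1 : ℂ)^b.length) • Pl r (a ++ b) := by
  rw [Pl_append, Pl_cons, mul_assoc, mul_assoc, Pl_γ_notMem hb, mul_smul_comm,
    mul_smul_comm, ← mul_assoc (Γgen r j), γ_sq, one_mul, Pl_append]

/-- anticommutation for a nodup list of even length with j in it -/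
lemma γ_Pl_anticomm_even {j : Fin (2*r)} {l : List (Fin (2*r))} (hn : l.Nodup)
    (h : j ∈ l) (he : Even l.length) :
    Γgen r j * Pl r l = -(Pl r l * Γgen r j) := by
  obtain ⟨a, b, rfl⟩ := List.append_of_mem h
  have hna : j ∉ a := fun hja =>
    (List.disjoint_of_nodup_append hn) hja (List.mem_cons_self : j ∈ j :: b)
  have hnb : j ∉ b := (List.nodup_cons.mp (List.nodup_append.mp hn).2.1).1
  have e1 := γ_Pl_left (r := r) a b hna
  have e2 := γ_Pl_right (r := r) a b hnb
  have hlen : (a ++ j :: b).length = a.length + b.length + 1 := by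
    simp [List.length_append]; ring
  have hodd : Odd (a.length + b.length) := by
    rw [hlen] at he
    rcases Nat.even_or_odd (a.length + b.length) with hE | hO
    · exact absurd he (by simp [Nat.even_add_one, hE])
    · exact hO
  have hsgn : ((-1 : ℂ)^a.length) = -((-1 : ℂ)^b.length) := by
    have : ((-1 : ℂ)^(a.length + b.length)) = -1 := Odd.neg_one_pow hodd
    have h2 : ((-1 : ℂ)^a.length) * ((-1 : ℂ)^b.length) = -1 := by
      rw [← pow_add]; exact this
    have hb2 : ((-1 : ℂ)^b.length) * ((-1 : ℂ)^b.length) = 1 := by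
      rw [← pow_add, ← two_mul, pow_mul]; norm_num
    calc ((-1 : ℂ)^a.length) = ((-1 : ℂ)^a.length) * (((-1 : ℂ)^b.length) * ((-1 : ℂ)^b.length)) := by rw [hb2, mul_one]
    _ = (((-1 : ℂ)^a.length) * ((-1 : ℂ)^b.length)) * ((-1 : ℂ)^b.length) := by ring
    _ = -((-1 : ℂ)^b.length) := by rw [h2]; ring
  rw [e1, e2, hsgn, neg_smul]

/-- a generator anticommutes with a nodup list of odd length not containing it -/
lemma γ_Pl_anticomm_odd {j : Fin (2*r)} {l : List (Fin (2*r))}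
    (h : j ∉ l) (ho : Odd l.length) :
    Γgen r j * Pl r l = -(Pl r l * Γgen r j) := by
  rw [γ_Pl_notMem h, Odd.neg_one_pow ho, neg_smul, one_smul]

/-- Products over permuted lists agree up to sign. -/
lemma Pl_perm {l l' : List (Fin (2*r))} (h : l.Perm l') :
    Pl r l = Pl r l' ∨ Pl r l = -(Pl r l') := by
  induction h with
  | nil => exact Or.inl rfl
  | cons a _ ih =>
    rcases ih with h1 | h1
    · exact Or.inl (by rw [Pl_cons, Pl_cons, h1])
    · exact Or.inr (by rw [Pl_cons, Pl_cons, h1, mul_neg])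
  | swap x y t =>
    rcases eq_or_ne y x with rfl | hxy
    · exact Or.inl rfl
    · refine Or.inr ?_
      rw [Pl_cons, Pl_cons, Pl_cons, Pl_cons, ← mul_assoc, ← mul_assoc,
        γ_anti hxy, neg_mul]
  | trans _ _ ih1 ih2 =>
    rcases ih1 with h1 | h1 <;> rcases ih2 with h2 | h2
    · exact Or.inl (h1.trans h2)
    · exact Or.inr (h1.trans h2)
    · exact Or.inr (by rw [h1, h2])
    · exact Or.inl (by rw [h1, h2, neg_neg])

end Aux


def ki (r : ℕ) (i : Fin (2*r)) : Cl r ⊗[ℂ] Cl r := Γgen r i ⊗ₜ[ℂ] Γgen r i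

def KS (r : ℕ) (S : Finset (Fin (2*r))) : Cl r ⊗[ℂ] Cl r :=
  Pl r (S.sort (·≤·)) ⊗ₜ[ℂ] Pl r (S.sort (·≤·))

def Sdel {r : ℕ} (i : Fin (2*r)) (S : Finset (Fin (2*r))) : Finset (Fin (2*r)) :=
  if i ∈ S then S.erase i else insert i S

namespace Aux
variable {r : ℕ}

lemma smul_tmul_sq (c : ℂ) (x y : Cl r) :
    (c • x) ⊗ₜ[ℂ] (c • y) = (c * c) • (x ⊗ₜ[ℂ] y) := by
  rw [TensorProduct.smul_tmul', TensorProduct.tmul_smul, TensorProduct.smul_tmul', smul_smul]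

lemma Kl_eq_KS {l : List (Fin (2*r))} (h : l.Nodup) :
    Pl r l ⊗ₜ[ℂ] Pl r l = KS r l.toFinset := by
  have hp : (l.toFinset.sort (·≤·)).Perm l :=
    (Finset.sort_perm_toList _ _).trans (List.toFinset_toList h)
  rcases Pl_perm (r := r) hp with h1 | h1
  · rw [KS, h1]
  · rw [KS, h1, TensorProduct.neg_tmul, TensorProduct.tmul_neg, neg_neg]

lemma KS_empty : KS r ∅ = 1 := by
  rw [KS, Finset.sort_empty, Pl_nil, Algebra.TensorProduct.one_def]

lemma ki_mul_KS (i : Fin (2*r)) (S : Finset (Fin (2*r))) :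
    ki r i * KS r S = KS r (Sdel i S) := by
  set l := S.sort (·≤·) with hl
  have hln : l.Nodup := Finset.sort_nodup _ _
  have hlf : l.toFinset = S := Finset.sort_toFinset _ _
  have hmem : ∀ x, x ∈ l ↔ x ∈ S := fun x => by rw [← hlf, List.mem_toFinset]
  by_cases hi : i ∈ S
  · -- i ∈ S : use γ_Pl_left
    have hil : i ∈ l := (hmem i).2 hi
    obtain ⟨a, b, hab⟩ := List.append_of_mem hil
    have hn' : (a ++ i :: b).Nodup := hab ▸ hln
    have hna : i ∉ a := fun hja =>
      (List.disjoint_of_nodup_append hn') hja (List.mem_cons_self : i ∈ i :: b)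
    have hnb : i ∉ b := (List.nodup_cons.mp (List.nodup_append.mp hn').2.1).1
    have hprod : Γgen r i * Pl r l = ((-1 : ℂ)^a.length) • Pl r (a ++ b) := by
      rw [hl] at hab ⊢; rw [hab]; exact γ_Pl_left a b hna
    have habn : (a ++ b).Nodup := by
      refine List.Nodup.sublist ?_ hn'
      exact (List.sublist_cons_self i b).append_left a
    have htf : (a ++ b).toFinset = S.erase i := by
      ext x
      simp only [List.toFinset_append, Finset.mem_union, List.mem_toFinset,
        Finset.mem_erase, ← hmem, hab, List.mem_append, List.mem_cons]
      constructor
      · rintro (hx | hx)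
        · exact ⟨fun hh => hna (hh ▸ hx), Or.inl hx⟩
        · exact ⟨fun hh => hnb (hh ▸ hx), Or.inr (Or.inr hx)⟩
      · rintro ⟨hx, (hh | hh | hh)⟩
        · exact Or.inl hh
        · exact absurd hh hx
        · exact Or.inr hh
    rw [ki, KS, ← hl, Algebra.TensorProduct.tmul_mul_tmul, hprod, smul_tmul_sq,
      ← pow_add, ← two_mul, pow_mul]
    norm_num
    rw [Kl_eq_KS habn, htf, Sdel, if_pos hi]
  · -- i ∉ S
    have hil : i ∉ l := fun hh => hi ((hmem i).1 hh)
    have : Γgen r i * Pl r l = Pl r (i :: l) := (Pl_cons i l).symm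
    rw [ki, KS, ← hl, Algebra.TensorProduct.tmul_mul_tmul, this,
      Kl_eq_KS (List.nodup_cons.mpr ⟨hil, hln⟩)]
    rw [List.toFinset_cons, hlf, Sdel, if_neg hi]

lemma list_ki_prod (l : List (Fin (2*r))) :
    (l.map (ki r)).prod = Pl r l ⊗ₜ[ℂ] Pl r l := by
  induction l with
  | nil => simp [Pl_nil, Algebra.TensorProduct.one_def]
  | cons a t ih =>
    rw [List.map_cons, List.prod_cons, ih, ki, Algebra.TensorProduct.tmul_mul_tmul,
      ← Pl_cons]

end Aux


def χk {r : ℕ} (S T : Finset (Fin (2*r))) : ℂ := (-1)^(S ∩ T).card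

def eT (r : ℕ) (T : Finset (Fin (2*r))) : Cl r ⊗[ℂ] Cl r :=
  ((2:ℂ)^(2*r))⁻¹ • ∑ S : Finset (Fin (2*r)), χk S T • KS r S

namespace Aux
variable {r : ℕ}

lemma Sdel_def_pos {i : Fin (2*r)} {S : Finset (Fin (2*r))} (h : i ∈ S) :
    Sdel i S = S.erase i := by rw [Sdel, if_pos h]

lemma Sdel_def_neg {i : Fin (2*r)} {S : Finset (Fin (2*r))} (h : i ∉ S) :
    Sdel i S = insert i S := by rw [Sdel, if_neg h]

lemma Sdel_invol (i : Fin (2*r)) (S : Finset (Fin (2*r))) : Sdel i (Sdel i S) = S := by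
  by_cases hi : i ∈ S
  · rw [Sdel_def_pos hi, Sdel_def_neg (Finset.notMem_erase i S), Finset.insert_erase hi]
  · rw [Sdel_def_neg hi, Sdel_def_pos (Finset.mem_insert_self i S), Finset.erase_insert hi]

lemma χk_Sdel (i : Fin (2*r)) (S T : Finset (Fin (2*r))) :
    χk (Sdel i S) T = (if i ∈ T then (-1:ℂ) else 1) * χk S T := by
  by_cases hiT : i ∈ T
  · rw [if_pos hiT]
    by_cases hiS : i ∈ S
    · have hmem : i ∈ S ∩ T := Finset.mem_inter.mpr ⟨hiS, hiT⟩
      have hset : (Sdel i S) ∩ T = (S ∩ T).erase i := by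
        rw [Sdel_def_pos hiS]
        ext x
        simp only [Finset.mem_inter, Finset.mem_erase]
        tauto
      have hcard : (S ∩ T).card = ((Sdel i S) ∩ T).card + 1 := by
        rw [hset, Finset.card_erase_of_mem hmem]
        exact (Nat.succ_pred_eq_of_pos (Finset.card_pos.mpr ⟨i, hmem⟩)).symm
      rw [χk, χk, hcard, pow_succ]
      ring
    · have hset : (Sdel i S) ∩ T = insert i (S ∩ T) := by
        rw [Sdel, if_neg hiS]
        ext x
        simp only [Finset.mem_inter, Finset.mem_insert]
        constructor
        · rintro ⟨(rfl | hx), hxT⟩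
          · exact Or.inl rfl
          · exact Or.inr ⟨hx, hxT⟩
        · rintro (rfl | ⟨hx, hxT⟩)
          · exact ⟨Or.inl rfl, hiT⟩
          · exact ⟨Or.inr hx, hxT⟩
      have hni : i ∉ S ∩ T := fun hh => hiS (Finset.mem_inter.mp hh).1
      rw [χk, χk, hset, Finset.card_insert_of_notMem hni, pow_succ]
      ring
  · rw [if_neg hiT, one_mul]
    have hset : (Sdel i S) ∩ T = S ∩ T := by
      by_cases hiS : i ∈ S
      · rw [Sdel_def_pos hiS]
        ext x
        simp only [Finset.mem_inter, Finset.mem_erase]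
        constructor
        · rintro ⟨⟨hne, hx⟩, hxT⟩; exact ⟨hx, hxT⟩
        · rintro ⟨hx, hxT⟩
          refine ⟨⟨?_, hx⟩, hxT⟩
          rintro rfl
          exact hiT hxT
      · rw [Sdel_def_neg hiS]
        ext x
        simp only [Finset.mem_inter, Finset.mem_insert]
        constructor
        · rintro ⟨(rfl | hx), hxT⟩
          · exact absurd hxT hiT
          · exact ⟨hx, hxT⟩
        · rintro ⟨hx, hxT⟩; exact ⟨Or.inr hx, hxT⟩
    rw [χk, χk, hset]

lemma ki_mul_eT (i : Fin (2*r)) (T : Finset (Fin (2*r))) :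
    ki r i * eT r T = (if i ∈ T then (-1:ℂ) else 1) • eT r T := by
  rw [eT, mul_smul_comm, Finset.mul_sum]
  have h1 : ∀ S : Finset (Fin (2*r)), ki r i * (χk S T • KS r S) = χk S T • KS r (Sdel i S) :=
    fun S => by rw [mul_smul_comm, ki_mul_KS]
  rw [Finset.sum_congr rfl (fun S _ => h1 S)]
  have h2 : (∑ S : Finset (Fin (2*r)), χk S T • KS r (Sdel i S))
      = ∑ S : Finset (Fin (2*r)), χk (Sdel i S) T • KS r S := by
    refine Fintype.sum_bijective (Sdel i) (Function.Involutive.bijective (Sdel_invol i)) _ _ ?_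
    intro S
    rw [Sdel_invol]
  rw [h2]
  have h3 : ∀ S : Finset (Fin (2*r)), χk (Sdel i S) T • KS r S
      = (if i ∈ T then (-1:ℂ) else 1) • (χk S T • KS r S) := fun S => by
    rw [χk_Sdel, mul_smul]
  rw [Finset.sum_congr rfl (fun S _ => h3 S), ← Finset.smul_sum, smul_comm]

lemma char_sum (S : Finset (Fin (2*r))) :
    (∑ T : Finset (Fin (2*r)), χk S T) = if S = ∅ then (2:ℂ)^(2*r) else 0 := by
  have key : ∀ T : Finset (Fin (2*r)), χk S T = ∏ i ∈ T, (if i ∈ S then (-1:ℂ) else 1) := by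
    intro T
    rw [Finset.prod_ite, Finset.prod_const, Finset.prod_const, one_pow, mul_one,
      Finset.filter_mem_eq_inter, χk, Finset.inter_comm]
  rw [Finset.sum_congr rfl (fun T _ => key T)]
  have huniv : (Finset.univ : Finset (Finset (Fin (2*r)))) = (Finset.univ : Finset (Fin (2*r))).powerset :=
    Finset.powerset_univ.symm
  rw [huniv]
  have := Finset.prod_add (fun i : Fin (2*r) => (if i ∈ S then (-1:ℂ) else 1))
    (fun _ => (1:ℂ)) Finset.univ
  simp only [Finset.prod_const_one, mul_one] at this
  rw [← this]
  by_cases hS : S = ∅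
  · rw [if_pos hS]
    subst hS
    simp [Finset.prod_const, Finset.card_univ]
    norm_num
  · rw [if_neg hS]
    obtain ⟨i, hi⟩ := Finset.nonempty_iff_ne_empty.mpr hS
    refine Finset.prod_eq_zero (Finset.mem_univ i) ?_
    rw [if_pos hi]
    ring

lemma sum_eT : ∑ T : Finset (Fin (2*r)), eT r T = 1 := by
  simp only [eT]
  rw [← Finset.smul_sum, Finset.sum_comm]
  have h1 : ∀ S : Finset (Fin (2*r)), (∑ T : Finset (Fin (2*r)), χk S T • KS r S)
      = (if S = ∅ then (2:ℂ)^(2*r) else 0) • KS r S := by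
    intro S
    rw [← Finset.sum_smul, char_sum]
  rw [Finset.sum_congr rfl (fun S _ => h1 S)]
  rw [Finset.sum_eq_single (∅ : Finset (Fin (2*r)))
    (fun S _ hS => by rw [if_neg hS, zero_smul])
    (fun h => absurd (Finset.mem_univ _) h)]
  rw [if_pos rfl, KS_empty, smul_smul, inv_mul_cancel₀ (pow_ne_zero _ (two_ne_zero)), one_smul]

end Aux


namespace Aux
variable {r : ℕ}

lemma perm_two_univ :
    (Finset.univ : Finset (Equiv.Perm (Fin 2))) = {1, Equiv.swap 0 1} := by decide

lemma Γbr_two (i : Fin 2 → Fin (2*r)) :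
    Γbr r 2 i = (2:ℂ)⁻¹ •
      (Γgen r (i 0) * Γgen r (i 1) - Γgen r (i 1) * Γgen r (i 0)) := by
  rw [Γbr, perm_two_univ]
  rw [Finset.sum_insert (by decide), Finset.sum_singleton]
  have h1 : Equiv.Perm.sign (1 : Equiv.Perm (Fin 2)) = 1 := by simp
  have h2 : Equiv.Perm.sign (Equiv.swap (0:Fin 2) 1) = -1 :=
    Equiv.Perm.sign_swap (by decide)
  rw [h1, h2]
  simp only [Equiv.Perm.one_apply, Equiv.swap_apply_left, Equiv.swap_apply_right,
    List.ofFn_succ, List.ofFn_zero, List.prod_cons, List.prod_nil, mul_one,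
    Units.val_one, Int.cast_one, one_smul, Units.val_neg, Int.cast_neg, neg_smul,
    Nat.factorial]
  norm_num [sub_eq_add_neg]

lemma Γbr_two_diag (i : Fin 2 → Fin (2*r)) (h : i 0 = i 1) : Γbr r 2 i = 0 := by
  rw [Γbr_two, h, sub_self, smul_zero]

lemma Γbr_two_offdiag (i : Fin 2 → Fin (2*r)) (h : i 0 ≠ i 1) :
    Γbr r 2 i = Γgen r (i 0) * Γgen r (i 1) := by
  rw [Γbr_two, γ_anti h.symm, sub_neg_eq_add, ← two_smul ℂ, smul_smul]
  norm_num

end Aux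


def KK (r : ℕ) : Cl r ⊗[ℂ] Cl r := ∑ i, ki r i

namespace Aux
variable {r : ℕ}

lemma ki_sq (i : Fin (2*r)) : ki r i * ki r i = 1 := by
  rw [ki, Algebra.TensorProduct.tmul_mul_tmul, γ_sq, Algebra.TensorProduct.one_def]

lemma Ik_two : Ik r 2 = KK r * KK r - ((2*r : ℕ) : ℂ) • 1 := by
  have hre := Equiv.sum_comp (piFinTwoEquiv (fun _ => Fin (2*r))).symm
    (fun i => (Γbr r 2 i) ⊗ₜ[ℂ] (Γbr r 2 i))
  rw [Ik, ← hre, Fintype.sum_prod_type]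
  have key : ∀ a b : Fin (2*r),
      (Γbr r 2 ((piFinTwoEquiv (fun _ => Fin (2*r))).symm (a, b))) ⊗ₜ[ℂ]
      (Γbr r 2 ((piFinTwoEquiv (fun _ => Fin (2*r))).symm (a, b)))
      = ki r a * ki r b - (if a = b then 1 else 0) := by
    intro a b
    have h0 : ((piFinTwoEquiv (fun _ => Fin (2*r))).symm (a, b)) 0 = a := rfl
    have h1 : ((piFinTwoEquiv (fun _ => Fin (2*r))).symm (a, b)) 1 = b := rfl
    by_cases hab : a = b
    · rw [if_pos hab]
      rw [Γbr_two_diag _ (by rw [h0, h1, hab]), TensorProduct.zero_tmul]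
      subst hab
      rw [ki_sq, sub_self]
    · rw [if_neg hab]
      rw [Γbr_two_offdiag _ (by rw [h0, h1]; exact hab), h0, h1, sub_zero,
        ki, ki, Algebra.TensorProduct.tmul_mul_tmul]
  rw [Finset.sum_congr rfl (fun a _ => Finset.sum_congr rfl (fun b _ => key a b))]
  rw [Finset.sum_congr rfl (fun a _ => Finset.sum_sub_distrib _ _)]
  rw [Finset.sum_sub_distrib]
  congr 1
  · rw [KK, Finset.sum_mul_sum]
  · have : ∀ a : Fin (2*r), (∑ b : Fin (2*r), if a = b then (1 : Cl r ⊗[ℂ] Cl r) else 0) = 1 :=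
      fun a => by rw [Finset.sum_ite_eq Finset.univ a (fun _ => (1 : Cl r ⊗[ℂ] Cl r)), if_pos (Finset.mem_univ a)]
    rw [Finset.sum_congr rfl (fun a _ => this a), Finset.sum_const, Finset.card_univ,
      Fintype.card_fin, Nat.cast_smul_eq_nsmul]

lemma KK_mul_eT (T : Finset (Fin (2*r))) :
    KK r * eT r T = (2*(r:ℂ) - 2*T.card) • eT r T := by
  rw [KK, Finset.sum_mul, Finset.sum_congr rfl (fun i _ => ki_mul_eT i T), ← Finset.sum_smul]
  congr 1
  rw [← Finset.sum_add_sum_compl T]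
  have hT : (∑ i ∈ T, if i ∈ T then (-1:ℂ) else 1) = -T.card := by
    rw [Finset.sum_congr rfl (fun i hi => if_pos hi), Finset.sum_const, nsmul_eq_mul]
    ring
  have hTc : (∑ i ∈ Tᶜ, if i ∈ T then (-1:ℂ) else 1) = (2*r - T.card : ℕ) := by
    rw [Finset.sum_congr rfl (fun i hi => if_neg (Finset.mem_compl.mp hi)),
      Finset.sum_const, nsmul_eq_mul, mul_one, Finset.card_compl, Fintype.card_fin]
  have hcard : T.card ≤ 2*r := by
    have h := Finset.card_le_univ T
    simpa using h
  rw [hT, hTc]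
  push_cast [hcard]
  ring

lemma sC_mul_eT (hr : 2 ≤ r) (T : Finset (Fin (2*r))) :
    sC r * eT r T = cEv r T.card • eT r T := by
  have hr1 : (r:ℂ) - 1 ≠ 0 := by
    have : (r:ℂ) ≠ 1 := by
      exact_mod_cast (fun h => by omega : r ≠ 1)
    exact sub_ne_zero.mpr this
  have h1 : Ik r 2 * eT r T = ((2*(r:ℂ) - 2*T.card)^2 - 2*r) • eT r T := by
    rw [Ik_two, sub_mul, mul_assoc, KK_mul_eT, mul_smul_comm, KK_mul_eT, smul_smul,
      smul_mul_assoc, one_mul, sub_smul]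
    congr 2
    · ring
    · push_cast
      ring
  rw [sC, smul_mul_assoc, h1, smul_smul]
  congr 1
  rw [cEv]
  have h2 : (16*(2*(r:ℂ)-2)) ≠ 0 := by
    intro h
    apply hr1
    have : (2:ℂ) * ((r:ℂ) - 1) = 0 := by linear_combination h/16
    rcases mul_eq_zero.mp this with h' | h'
    · norm_num at h'
    · exact h'
  have h3 : (16*((r:ℂ)-1)) ≠ 0 := by
    intro h
    apply hr1
    rcases mul_eq_zero.mp h with h' | h'
    · norm_num at h'
    · exact h'
  field_simp
  ring

end Aux


namespace Aux
variable {r : ℕ}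

lemma cEv_symm' {t : ℕ} (ht : t ≤ 2*r) : cEv r (2*r - t) = cEv r t := by
  rw [cEv, cEv]
  congr 1
  push_cast [ht]
  ring

lemma hr1C (hr : 2 ≤ r) : (r:ℂ) - 1 ≠ 0 := by
  have : (r:ℂ) ≠ 1 := by exact_mod_cast (fun h => by omega : r ≠ 1)
  exact sub_ne_zero.mpr this

lemma cEv_inj (hr : 2 ≤ r) {a b : ℕ} (ha : a ≤ r) (hb : b ≤ r) (hab : a ≠ b) :
    cEv r a ≠ cEv r b := by
  intro h
  have h3 : (16*((r:ℂ)-1)) ≠ 0 := by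
    intro hh
    apply hr1C hr
    rcases mul_eq_zero.mp hh with h' | h'
    · norm_num at h'
    · exact h'
  rw [cEv, cEv, div_eq_div_iff h3 h3] at h
  have hnum : 2*(a:ℂ)*(2*(r:ℂ)-(a:ℂ)) - (r:ℂ)*(2*(r:ℂ)-1)
      = 2*(b:ℂ)*(2*(r:ℂ)-(b:ℂ)) - (r:ℂ)*(2*(r:ℂ)-1) :=
    mul_right_cancel₀ h3 h
  have key : ((a:ℂ) - b) * (2*(r:ℂ) - a - b) = 0 := by linear_combination hnum / 2
  rcases mul_eq_zero.mp key with h' | h'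
  · exact hab (by exact_mod_cast sub_eq_zero.mp h')
  · have h2 : 2*(r:ℂ) = (a:ℂ) + b := by linear_combination h'
    have h2' : 2*r = a + b := by exact_mod_cast h2
    omega

lemma factors_mul_eT (hr : 2 ≤ r) (k : ℕ) (T : Finset (Fin (2*r))) (L : List ℕ) :
    ((L.map (fun j => (cEv r k - cEv r j)⁻¹ • (sC r - cEv r j • 1))).prod) * eT r T
    = ((L.map (fun j => (cEv r k - cEv r j)⁻¹ * (cEv r T.card - cEv r j))).prod) • eT r T := by
  induction L with
  | nil => simp
  | cons j t ih =>
    rw [List.map_cons, List.prod_cons, List.map_cons, List.prod_cons, mul_assoc, ih,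
      mul_smul_comm, smul_mul_assoc, sub_mul, smul_mul_assoc, one_mul, sC_mul_eT hr,
      ← sub_smul, smul_smul, smul_smul]
    congr 1
    ring

lemma Pk_mul_eT (hr : 2 ≤ r) {k : ℕ} (hk : k ≤ r) (T : Finset (Fin (2*r))) :
    Pk r k * eT r T
      = (if T.card = k ∨ T.card = 2*r - k then (1:ℂ) else 0) • eT r T := by
  have hcard : T.card ≤ 2*r := by
    have h := Finset.card_le_univ T
    simpa using h
  rw [Pk, factors_mul_eT hr]
  congr 1
  by_cases hc : T.card = k ∨ T.card = 2*r - k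
  · rw [if_pos hc]
    apply List.prod_eq_one
    intro x hx
    obtain ⟨j, hj, rfl⟩ := List.mem_map.mp hx
    have hjr : j ≤ r := by
      have h := (List.mem_filter.mp hj).1
      rw [List.mem_range] at h
      omega
    have hjk : j ≠ k := by simpa using (List.mem_filter.mp hj).2
    have hT : cEv r T.card = cEv r k := by
      rcases hc with h | h
      · rw [h]
      · rw [h, cEv_symm' (by omega : k ≤ 2*r)]
    rw [hT]
    exact inv_mul_cancel₀ (sub_ne_zero.mpr (cEv_inj hr hk hjr (fun hh => hjk hh.symm)))
  · rw [if_neg hc]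
    push_neg at hc
    set t' := if T.card ≤ r then T.card else 2*r - T.card with ht'
    have ht'r : t' ≤ r := by
      rw [ht']
      split_ifs with h
      · exact h
      · omega
    have ht'k : t' ≠ k := by
      rw [ht']
      split_ifs with h
      · exact hc.1
      · intro hh
        exact hc.2 (by omega)
    have hceq : cEv r T.card = cEv r t' := by
      rw [ht']
      split_ifs with h
      · rfl
      · exact (cEv_symm' hcard).symm
    apply List.prod_eq_zero
    refine List.mem_map.mpr ⟨t', List.mem_filter.mpr ⟨List.mem_range.mpr (by omega), by simpa using ht'k⟩, ?_⟩
    rw [hceq, sub_self, mul_zero]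

lemma Pk_decomp (hr : 2 ≤ r) {k : ℕ} (hk : k ≤ r) :
    Pk r k = ∑ T ∈ Finset.univ.filter
        (fun T : Finset (Fin (2*r)) => T.card = k ∨ T.card = 2*r - k), eT r T := by
  conv_lhs => rw [← mul_one (Pk r k), ← sum_eT (r := r)]
  rw [Finset.mul_sum, Finset.sum_congr rfl (fun T _ => Pk_mul_eT hr hk T)]
  rw [Finset.sum_congr rfl (fun T _ => by rw [ite_smul, one_smul, zero_smul] :
    ∀ T ∈ Finset.univ, (if T.card = k ∨ T.card = 2*r - k then (1:ℂ) else 0) • eT r T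
      = if T.card = k ∨ T.card = 2*r - k then eT r T else 0)]
  rw [← Finset.sum_filter]

end Aux


namespace Aux
variable {r : ℕ} (φ : Cl r ≃ₐ[ℂ] Matrix (Fin (2^r)) (Fin (2^r)) ℂ)

lemma trace_zero_of_anticomm {x : Cl r} {j : Fin (2*r)}
    (h : Γgen r j * x = -(x * Γgen r j)) : Matrix.trace (φ x) = 0 := by
  have e1 : Matrix.trace (φ (Γgen r j * x * Γgen r j)) = Matrix.trace (φ x) := by
    rw [map_mul, Matrix.trace_mul_comm, ← map_mul, ← mul_assoc, γ_sq, one_mul]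
  have e2 : Γgen r j * x * Γgen r j = -x := by
    rw [h, neg_mul, mul_assoc, γ_sq, mul_one]
  rw [e2, map_neg, Matrix.trace_neg] at e1
  have : (2:ℂ) * Matrix.trace (φ x) = 0 := by linear_combination -e1
  rcases mul_eq_zero.mp this with h' | h'
  · norm_num at h'
  · exact h'

lemma trace_Pl_zero {l : List (Fin (2*r))} (hn : l.Nodup) (hne : l ≠ []) :
    Matrix.trace (φ (Pl r l)) = 0 := by
  rcases Nat.even_or_odd l.length with he | ho
  · obtain ⟨j, hj⟩ := List.exists_mem_of_ne_nil l hne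
    exact trace_zero_of_anticomm φ (γ_Pl_anticomm_even hn hj he)
  · have hlen : l.length ≤ 2*r := by
      have h := List.Nodup.length_le_card hn
      simpa using h
    have hlt : l.length ≠ 2*r := by
      intro hh
      rw [hh] at ho
      exact (Nat.not_odd_iff_even.mpr (even_two_mul r)) ho
    have hex : ∃ j, j ∉ l := by
      by_contra hco
      push_neg at hco
      have htf : l.toFinset = Finset.univ := Finset.eq_univ_iff_forall.mpr
        (fun j => List.mem_toFinset.mpr (hco j))
      have hcc : l.toFinset.card = l.length := List.toFinset_card_of_nodup hn
      rw [htf] at hcc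
      simp at hcc
      omega
    obtain ⟨j, hj⟩ := hex
    exact trace_zero_of_anticomm φ (γ_Pl_anticomm_odd hj ho)

lemma trace_φ_one : Matrix.trace (φ (1 : Cl r)) = (2:ℂ)^r := by
  rw [map_one, Matrix.trace_one]
  simp

lemma Γtop_eq : Γtop r = ((-Complex.I)^r) • Pl r (List.finRange (2*r)) := by
  rw [Γtop, Pl, List.ofFn_eq_map]

lemma trace_Γtop (hr : 1 ≤ r) : Matrix.trace (φ (Γtop r)) = 0 := by
  rw [Γtop_eq, map_smul, Matrix.trace_smul, trace_Pl_zero φ (List.nodup_finRange _)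
    (by
      intro hh
      have := congrArg List.length hh
      simp at this
      omega), smul_zero]

variable (Φ : Cl r ⊗[ℂ] Cl r →ₐ[ℂ] Matrix (Fin (2^r) × Fin (2^r)) (Fin (2^r) × Fin (2^r)) ℂ)
  (hΦ : ∀ a b : Cl r, Φ (a ⊗ₜ[ℂ] b) = Matrix.kroneckerMap (· * ·) (φ a) (φ b))

include hΦ

lemma τ_tmul (a b : Cl r) :
    Matrix.trace (Φ (a ⊗ₜ[ℂ] b)) = Matrix.trace (φ a) * Matrix.trace (φ b) := by
  rw [hΦ, Matrix.trace_kronecker]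

lemma τ_KS (S : Finset (Fin (2*r))) :
    Matrix.trace (Φ (KS r S)) = if S = ∅ then (2:ℂ)^(2*r) else 0 := by
  rw [KS, τ_tmul φ Φ hΦ]
  by_cases hS : S = ∅
  · rw [if_pos hS, hS, Finset.sort_empty, Pl_nil, trace_φ_one, ← pow_add, two_mul]
  · rw [if_neg hS]
    have hne : S.sort (·≤·) ≠ [] := by
      intro hh
      apply hS
      have hcard := Finset.length_sort (α := Fin (2*r)) (·≤·) (s := S)
      rw [hh] at hcard
      exact Finset.card_eq_zero.mp hcard.symm
    rw [trace_Pl_zero φ (Finset.sort_nodup _ _) hne, mul_zero]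

end Aux


namespace Aux
variable {r : ℕ}

lemma kiProd_mul_eT (T : Finset (Fin (2*r))) (l : List (Fin (2*r))) (hl : l.Nodup) :
    (l.map (ki r)).prod * eT r T = χk l.toFinset T • eT r T := by
  induction l with
  | nil => simp [χk]
  | cons a t ih =>
    have hat : a ∉ t := (List.nodup_cons.mp hl).1
    have htn : t.Nodup := (List.nodup_cons.mp hl).2
    rw [List.map_cons, List.prod_cons, mul_assoc, ih htn, mul_smul_comm, ki_mul_eT,
      smul_smul, List.toFinset_cons]
    have hins : insert a t.toFinset = Sdel a t.toFinset :=
      (Sdel_def_neg (by simpa using hat)).symm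
    rw [hins, χk_Sdel]
    congr 1
    ring

lemma KSuniv_mul_eT (T : Finset (Fin (2*r))) :
    KS r Finset.univ * eT r T = ((-1:ℂ)^T.card) • eT r T := by
  have h1 : KS r Finset.univ = ((List.finRange (2*r)).map (ki r)).prod := by
    rw [list_ki_prod, Kl_eq_KS (List.nodup_finRange _), List.toFinset_finRange]
  rw [h1, kiProd_mul_eT _ _ (List.nodup_finRange _), List.toFinset_finRange]
  congr 1
  rw [χk, Finset.univ_inter]

lemma toptop (hre : Even r) : Γtop r ⊗ₜ[ℂ] Γtop r = KS r Finset.univ := by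
  rw [Γtop_eq, smul_tmul_sq, Kl_eq_KS (List.nodup_finRange _), List.toFinset_finRange]
  have hc : ((-Complex.I)^r * (-Complex.I)^r) = 1 := by
    rw [← pow_add, ← two_mul, pow_mul]
    have : (-Complex.I)^2 = -1 := by
      rw [neg_pow, Complex.I_sq]
      norm_num
    rw [this, Even.neg_one_pow hre]
  rw [hc, one_smul]

variable (φ : Cl r ≃ₐ[ℂ] Matrix (Fin (2^r)) (Fin (2^r)) ℂ)
  (Φ : Cl r ⊗[ℂ] Cl r →ₐ[ℂ] Matrix (Fin (2^r) × Fin (2^r)) (Fin (2^r) × Fin (2^r)) ℂ)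
  (hΦ : ∀ a b : Cl r, Φ (a ⊗ₜ[ℂ] b) = Matrix.kroneckerMap (· * ·) (φ a) (φ b))

include hΦ

lemma τ_eT (T : Finset (Fin (2*r))) : Matrix.trace (Φ (eT r T)) = 1 := by
  rw [eT, map_smul, Matrix.trace_smul, map_sum, Matrix.trace_sum]
  have h1 : ∀ S : Finset (Fin (2*r)),
      Matrix.trace (Φ (χk S T • KS r S)) = if S = ∅ then χk S T * (2:ℂ)^(2*r) else 0 := by
    intro S
    rw [map_smul, Matrix.trace_smul, τ_KS φ Φ hΦ, smul_eq_mul]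
    split_ifs
    · rfl
    · rw [mul_zero]
  rw [Finset.sum_congr rfl (fun S _ => h1 S),
    Finset.sum_eq_single (∅ : Finset (Fin (2*r)))
      (fun S _ hS => by rw [if_neg hS]) (fun h => absurd (Finset.mem_univ _) h)]
  rw [if_pos rfl]
  have : χk (∅ : Finset (Fin (2*r))) T = 1 := by simp [χk]
  rw [this, one_mul, smul_eq_mul, inv_mul_cancel₀ (pow_ne_zero _ (two_ne_zero))]

omit hΦ in
lemma tmul_mul_eT (a b : Cl r) (T : Finset (Fin (2*r))) :
    (a ⊗ₜ[ℂ] b) * eT r T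
    = ((2:ℂ)^(2*r))⁻¹ • ∑ S : Finset (Fin (2*r)), χk S T •
        ((a * Pl r (S.sort (·≤·))) ⊗ₜ[ℂ] (b * Pl r (S.sort (·≤·)))) := by
  rw [eT, mul_smul_comm, Finset.mul_sum]
  congr 1
  refine Finset.sum_congr rfl (fun S _ => ?_)
  rw [mul_smul_comm, KS, Algebra.TensorProduct.tmul_mul_tmul]

lemma τ_top1_eT (hr : 1 ≤ r) (T : Finset (Fin (2*r))) :
    Matrix.trace (Φ ((Γtop r ⊗ₜ[ℂ] (1 : Cl r)) * eT r T)) = 0 := by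
  rw [tmul_mul_eT, map_smul, Matrix.trace_smul, map_sum, Matrix.trace_sum]
  have h1 : ∀ S : Finset (Fin (2*r)),
      Matrix.trace (Φ (χk S T •
        ((Γtop r * Pl r (S.sort (·≤·))) ⊗ₜ[ℂ] ((1:Cl r) * Pl r (S.sort (·≤·)))))) = 0 := by
    intro S
    rw [map_smul, Matrix.trace_smul, τ_tmul φ Φ hΦ]
    by_cases hS : S = ∅
    · subst hS
      simp only [Finset.sort_empty, Pl_nil, mul_one]
      rw [trace_Γtop φ hr, zero_mul, smul_zero]
    · have hne : S.sort (·≤·) ≠ [] := by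
        intro hh
        apply hS
        have hcard := Finset.length_sort (α := Fin (2*r)) (·≤·) (s := S)
        rw [hh] at hcard
        exact Finset.card_eq_zero.mp hcard.symm
      rw [one_mul, trace_Pl_zero φ (Finset.sort_nodup _ _) hne, mul_zero, smul_zero]
  rw [Finset.sum_congr rfl (fun S _ => h1 S), Finset.sum_const_zero, smul_zero]

lemma τ_1top_eT (hr : 1 ≤ r) (T : Finset (Fin (2*r))) :
    Matrix.trace (Φ (((1 : Cl r) ⊗ₜ[ℂ] Γtop r) * eT r T)) = 0 := by
  rw [tmul_mul_eT, map_smul, Matrix.trace_smul, map_sum, Matrix.trace_sum]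
  have h1 : ∀ S : Finset (Fin (2*r)),
      Matrix.trace (Φ (χk S T •
        (((1:Cl r) * Pl r (S.sort (·≤·))) ⊗ₜ[ℂ] (Γtop r * Pl r (S.sort (·≤·)))))) = 0 := by
    intro S
    rw [map_smul, Matrix.trace_smul, τ_tmul φ Φ hΦ]
    by_cases hS : S = ∅
    · subst hS
      simp only [Finset.sort_empty, Pl_nil, mul_one]
      rw [trace_Γtop φ hr, mul_zero, smul_zero]
    · have hne : S.sort (·≤·) ≠ [] := by
        intro hh
        apply hS
        have hcard := Finset.length_sort (α := Fin (2*r)) (·≤·) (s := S)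
        rw [hh] at hcard
        exact Finset.card_eq_zero.mp hcard.symm
      rw [one_mul, trace_Pl_zero φ (Finset.sort_nodup _ _) hne, zero_mul, smul_zero]
  rw [Finset.sum_congr rfl (fun S _ => h1 S), Finset.sum_const_zero, smul_zero]

lemma τ_toptop_eT (hre : Even r) (T : Finset (Fin (2*r))) :
    Matrix.trace (Φ ((Γtop r ⊗ₜ[ℂ] Γtop r) * eT r T)) = (-1:ℂ)^T.card := by
  rw [toptop hre, KSuniv_mul_eT, map_smul, Matrix.trace_smul, τ_eT φ Φ hΦ, smul_eq_mul,
    mul_one]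

omit hΦ in
lemma ppCh_expand (ε ε' : ℂ) :
    ppCh r ε ε' = (4⁻¹ : ℂ) •
      ((1 : Cl r ⊗[ℂ] Cl r) + ε • (Γtop r ⊗ₜ[ℂ] (1:Cl r))
        + ε' • ((1:Cl r) ⊗ₜ[ℂ] Γtop r) + (ε*ε') • (Γtop r ⊗ₜ[ℂ] Γtop r)) := by
  rw [ppCh, pCh, pCh, smul_tmul_sq]
  have h4 : (2:ℂ)⁻¹ * (2:ℂ)⁻¹ = 4⁻¹ := by norm_num
  rw [h4]
  congr 1
  rw [TensorProduct.add_tmul, TensorProduct.tmul_add, TensorProduct.tmul_add,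
    ← TensorProduct.smul_tmul', TensorProduct.tmul_smul, TensorProduct.tmul_smul,
    ← TensorProduct.smul_tmul', smul_smul, ← Algebra.TensorProduct.one_def,
    mul_comm ε' ε]
  abel

lemma τ_ppCh_eT (hr : 2 ≤ r) (hre : Even r) (ε ε' : ℂ) (T : Finset (Fin (2*r))) :
    Matrix.trace (Φ (ppCh r ε ε' * eT r T))
      = 4⁻¹ * (1 + (ε*ε') * (-1:ℂ)^T.card) := by
  rw [ppCh_expand, smul_mul_assoc, map_smul, Matrix.trace_smul]
  rw [add_mul, add_mul, add_mul, one_mul, smul_mul_assoc, smul_mul_assoc, smul_mul_assoc]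
  rw [map_add, map_add, map_add, map_smul, map_smul, map_smul]
  rw [Matrix.trace_add, Matrix.trace_add, Matrix.trace_add, Matrix.trace_smul,
    Matrix.trace_smul, Matrix.trace_smul]
  rw [τ_eT φ Φ hΦ, τ_top1_eT φ Φ hΦ (by omega), τ_1top_eT φ Φ hΦ (by omega),
    τ_toptop_eT φ Φ hΦ hre]
  simp only [smul_eq_mul]
  ring

end Aux


namespace Aux
variable {r : ℕ}

lemma card_filter_eq (k : ℕ) :
    (Finset.univ.filter (fun T : Finset (Fin (2*r)) => T.card = k)).card
      = (2*r).choose k := by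
  rw [← Finset.powerset_univ, ← Finset.powersetCard_eq_filter,
    Finset.card_powersetCard, Finset.card_univ, Fintype.card_fin]

lemma card_sel_lt {k : ℕ} (hk : k < r) :
    (Finset.univ.filter
      (fun T : Finset (Fin (2*r)) => T.card = k ∨ T.card = 2*r - k)).card
      = 2 * (2*r).choose k := by
  rw [Finset.filter_or, Finset.card_union_of_disjoint, card_filter_eq, card_filter_eq,
    Nat.choose_symm (by omega : k ≤ 2*r)]
  · ring
  · rw [Finset.disjoint_filter]
    intro T _ h1 h2
    omega

lemma card_sel_r :
    (Finset.univ.filter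
      (fun T : Finset (Fin (2*r)) => T.card = r ∨ T.card = 2*r - r)).card
      = (2*r).choose r := by
  rw [Finset.filter_congr (fun T _ => (by omega :
    (T.card = r ∨ T.card = 2*r - r) ↔ T.card = r)), card_filter_eq]

lemma choose_cast {k : ℕ} (hk : k ≤ 2*r) :
    (((2*r).choose k : ℕ) : ℂ)
      = ((2*r).factorial : ℂ) / ((k.factorial : ℂ) * ((2*r - k).factorial : ℂ)) := by
  have hne : ((k.factorial : ℂ) * ((2*r - k).factorial : ℂ)) ≠ 0 :=
    mul_ne_zero (Nat.cast_ne_zero.mpr (Nat.factorial_ne_zero _))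
      (Nat.cast_ne_zero.mpr (Nat.factorial_ne_zero _))
  rw [eq_div_iff hne]
  have h := Nat.choose_mul_factorial_mul_factorial hk
  push_cast [← h]
  ring

variable (φ : Cl r ≃ₐ[ℂ] Matrix (Fin (2^r)) (Fin (2^r)) ℂ)
  (Φ : Cl r ⊗[ℂ] Cl r →ₐ[ℂ] Matrix (Fin (2^r) × Fin (2^r)) (Fin (2^r) × Fin (2^r)) ℂ)
  (hΦ : ∀ a b : Cl r, Φ (a ⊗ₜ[ℂ] b) = Matrix.kroneckerMap (· * ·) (φ a) (φ b))

include hΦ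

lemma main_trace (hr : 2 ≤ r) (hre : Even r) (ε ε' : ℂ) {k : ℕ} (hk : k ≤ r) :
    Matrix.trace (Φ (ppCh r ε ε' * Pk r k))
      = (((Finset.univ.filter
            (fun T : Finset (Fin (2*r)) => T.card = k ∨ T.card = 2*r - k)).card : ℕ) : ℂ)
        * (4⁻¹ * (1 + (ε*ε') * (-1:ℂ)^k)) := by
  rw [Pk_decomp hr hk, Finset.mul_sum, map_sum, Matrix.trace_sum]
  have hconst : ∀ T ∈ Finset.univ.filter
      (fun T : Finset (Fin (2*r)) => T.card = k ∨ T.card = 2*r - k),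
      Matrix.trace (Φ (ppCh r ε ε' * eT r T)) = 4⁻¹ * (1 + (ε*ε') * (-1:ℂ)^k) := by
    intro T hT
    rw [τ_ppCh_eT φ Φ hΦ hr hre]
    have hpow : (-1:ℂ)^T.card = (-1:ℂ)^k := by
      rcases (Finset.mem_filter.mp hT).2 with h | h
      · rw [h]
      · rw [h]
        have hk2 : (2*r - k) + k = 2*r := by omega
        have h1 : (-1:ℂ)^(2*r - k) * (-1:ℂ)^k = 1 := by
          rw [← pow_add, hk2]
          exact Even.neg_one_pow (even_two_mul r)
        have h2 : (-1:ℂ)^k * (-1:ℂ)^k = 1 := by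
          rw [← pow_add, ← two_mul, pow_mul]
          norm_num
        exact mul_right_cancel₀ (pow_ne_zero _ (by norm_num : (-1:ℂ) ≠ 0))
          (h1.trans h2.symm)
    rw [hpow]
  rw [Finset.sum_congr rfl hconst, Finset.sum_const, nsmul_eq_mul]

end Aux

/-- traces of the chiral spectral projectors for even `r`. -/
theorem proj_traces_even_r (r : ℕ) (hr : 2 ≤ r) (hre : Even r)
    (φ : Cl r ≃ₐ[ℂ] Matrix (Fin (2^r)) (Fin (2^r)) ℂ)
    (Φ : Cl r ⊗[ℂ] Cl r →ₐ[ℂ] Matrix (Fin (2^r) × Fin (2^r)) (Fin (2^r) × Fin (2^r)) ℂ)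
    (hΦ : ∀ a b : Cl r, Φ (a ⊗ₜ[ℂ] b) = Matrix.kroneckerMap (· * ·) (φ a) (φ b))
    (ε : ℂ) (hε : ε = 1 ∨ ε = -1) :
    (∀ m : ℕ, 1 ≤ m → m ≤ r/2 →
      Matrix.trace (Φ (ppCh r ε (-ε) * Pk r (2*m-1)))
        = ((2*r).factorial : ℂ) / (((2*m-1).factorial : ℂ) * ((2*r-2*m+1).factorial : ℂ))) ∧
    (∀ m : ℕ, m ≤ r/2 - 1 →
      Matrix.trace (Φ (ppCh r ε ε * Pk r (2*m)))
        = ((2*r).factorial : ℂ) / (((2*m).factorial : ℂ) * ((2*r-2*m).factorial : ℂ))) ∧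
    Matrix.trace (Φ (ppCh r ε ε * Pk r r))
        = ((2*r).factorial : ℂ) / (2 * ((r.factorial : ℂ))^2) := by
  have hε2 : ε * ε = 1 := by rcases hε with rfl | rfl <;> norm_num
  obtain ⟨s, hs⟩ := hre
  refine ⟨?_, ?_, ?_⟩
  · intro m hm1 hm2
    have hs2 : r / 2 = s := by omega
    have hk : 2*m - 1 ≤ r := by omega
    have hklt : 2*m - 1 < r := by omega
    rw [Aux.main_trace φ Φ hΦ hr ⟨s, hs⟩ ε (-ε) hk, Aux.card_sel_lt hklt]
    have hodd : Odd (2*m-1) := ⟨m-1, by omega⟩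
    rw [Odd.neg_one_pow hodd]
    have he : ε * -ε = -1 := by rw [mul_neg, hε2]
    rw [he]
    have h2rk : 2*r - (2*m-1) = 2*r - 2*m + 1 := by omega
    rw [Nat.cast_mul, Aux.choose_cast (by omega : 2*m-1 ≤ 2*r), h2rk]
    push_cast
    ring
  · intro m hm2
    have hs2 : r / 2 = s := by omega
    have hk : 2*m ≤ r := by omega
    have hklt : 2*m < r := by omega
    rw [Aux.main_trace φ Φ hΦ hr ⟨s, hs⟩ ε ε hk, Aux.card_sel_lt hklt]
    have heven : Even (2*m) := ⟨m, by omega⟩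
    rw [Even.neg_one_pow heven, hε2]
    rw [Nat.cast_mul, Aux.choose_cast (by omega : 2*m ≤ 2*r)]
    push_cast
    ring
  · rw [Aux.main_trace φ Φ hΦ hr ⟨s, hs⟩ ε ε (le_refl r), Aux.card_sel_r]
    rw [Even.neg_one_pow ⟨s, hs⟩, hε2]
    rw [Aux.choose_cast (by omega : r ≤ 2*r)]
    have h2rr : 2*r - r = r := by omega
    rw [h2rr]
    have hf : ((r.factorial : ℕ) : ℂ) ≠ 0 := Nat.cast_ne_zero.mpr (Nat.factorial_ne_zero _)
    field_simp
    ring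

end
end

section
/- For every u ∈ ℂ the following identity holds in Cl ⊗ Cl: ( Σ_{k=0}^{r} ((−1)^k/(2k)!)·a_k(u)·a_{r−k}(u)·I_{2k} )·P_r^S = ( Π_{k=0}^{r−1}(u+k) )·P_r^S, where a_k(u) := Π_{j=0}^{k−1}(u/2 + j) is the ascending factorial (so a_k(u) = Γ(u/2+k)/Γ(u/2)) and P_r^S := (p_{+1,+1} + p_{−1,−1})·P_r. -/
open scoped TensorProduct

noncomputable section

namespace RSaux

open Finset Polynomial

abbrev CC (r : ℕ) := Cl r ⊗[ℂ] Cl r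

/-! ### Basic gamma matrix algebra -/

lemma Qf_single (r : ℕ) (i : Fin (2*r)) : Qf r (Pi.single i 1) = 1 := by
  rw [Qf, QuadraticMap.weightedSumSquares_apply]
  rw [Finset.sum_eq_single i]
  · simp
  · intro j _ hj; simp [Pi.single_apply, hj]
  · intro h; exact absurd (Finset.mem_univ i) h

lemma polar_single (r : ℕ) {i j : Fin (2*r)} (h : i ≠ j) :
    QuadraticMap.polar (⇑(Qf r)) (Pi.single i 1) (Pi.single j 1) = 0 := by
  have hsum : Qf r (Pi.single i 1 + Pi.single j 1) = 2 := by
    rw [Qf, QuadraticMap.weightedSumSquares_apply]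
    have hpt : ∀ t : Fin (2*r),
        (1:ℂ) • (((Pi.single i 1 + Pi.single j 1 : Fin (2*r) → ℂ)) t * ((Pi.single i 1 + Pi.single j 1 : Fin (2*r) → ℂ)) t)
        = (if t = i then 1 else 0) + (if t = j then 1 else 0) := by
      intro t
      by_cases hti : t = i <;> by_cases htj : t = j
      · exact absurd (hti ▸ htj : i = j) h
      all_goals simp [hti, htj, Pi.single_apply, h, Ne.symm h]
    rw [Finset.sum_congr rfl (fun t _ => hpt t), Finset.sum_add_distrib]
    simp
    norm_num
  rw [QuadraticMap.polar, hsum, Qf_single, Qf_single]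
  norm_num

lemma gam_sq (r : ℕ) (i : Fin (2*r)) : Γgen r i * Γgen r i = 1 := by
  rw [Γgen, CliffordAlgebra.ι_sq_scalar, Qf_single, map_one]

lemma gam_anticomm (r : ℕ) {i j : Fin (2*r)} (h : i ≠ j) :
    Γgen r i * Γgen r j = -(Γgen r j * Γgen r i) := by
  have h2 := CliffordAlgebra.ι_mul_ι_add_swap (Q := Qf r) (Pi.single i 1) (Pi.single j 1)
  rw [polar_single r h, map_zero] at h2
  rw [Γgen, Γgen]
  exact eq_neg_of_add_eq_zero_left h2

/-! ### Ordered products of gammas along a tuple -/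

def pl (r : ℕ) {k : ℕ} (v : Fin k → Fin (2*r)) : Cl r :=
  (List.ofFn fun j => Γgen r (v j)).prod

lemma pl_succ (r : ℕ) {k : ℕ} (v : Fin (k+1) → Fin (2*r)) :
    pl r v = Γgen r (v 0) * pl r (v ∘ Fin.succ) := by
  rw [pl, List.ofFn_succ, List.prod_cons]; rfl

lemma swap_succ {m : ℕ} (a b j : Fin m) :
    Equiv.swap a.succ b.succ j.succ = (Equiv.swap a b j).succ := by
  rcases eq_or_ne j a with rfl | hja
  · simp [Equiv.swap_apply_left]
  rcases eq_or_ne j b with rfl | hjb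
  · simp [Equiv.swap_apply_right]
  · rw [Equiv.swap_apply_of_ne_of_ne hja hjb,
      Equiv.swap_apply_of_ne_of_ne
        (fun hh => hja (Fin.succ_injective _ hh)) (fun hh => hjb (Fin.succ_injective _ hh))]

lemma pl_swap_adj (r : ℕ) : ∀ {k : ℕ} (v : Fin k → Fin (2*r)), Function.Injective v →
    ∀ (a b : Fin k), (a:ℕ) + 1 = (b:ℕ) →
    pl r (v ∘ Equiv.swap a b) = - pl r v := by
  intro k
  induction k with
  | zero => intro v _ a; exact a.elim0
  | succ k ih =>
    intro v hv a b hab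
    rcases eq_or_ne a 0 with rfl | ha0
    · have hb1 : (b:ℕ) = 1 := by simpa using hab.symm
      obtain ⟨k', rfl⟩ : ∃ k', k = k'+1 := ⟨k-1, by have := b.isLt; omega⟩
      have hb : b = (1 : Fin (k'+2)) := Fin.ext (by simpa using hb1)
      subst hb
      ·
        have htail : ∀ j : Fin k', (v ∘ ⇑(Equiv.swap (0 : Fin (k'+2)) 1)) j.succ.succ = v j.succ.succ := by
          intro j
          have h1 : j.succ.succ ≠ (0 : Fin (k'+2)) := Fin.succ_ne_zero _
          have h2 : j.succ.succ ≠ (1 : Fin (k'+2)) := by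
            intro hh
            have := congrArg (Fin.val) hh
            simp [Fin.val_succ] at this
          simp [Function.comp, Equiv.swap_apply_of_ne_of_ne h1 h2]
        rw [pl_succ, pl_succ, pl_succ r v, pl_succ r (v ∘ Fin.succ)]
        have e1 : (v ∘ ⇑(Equiv.swap (0:Fin (k'+2)) 1)) 0 = v 1 := by
          simp [Function.comp, Equiv.swap_apply_left]
        have e2 : ((v ∘ ⇑(Equiv.swap (0:Fin (k'+2)) 1)) ∘ Fin.succ) 0 = v 0 := by
          have : Fin.succ (0 : Fin (k'+1)) = (1 : Fin (k'+2)) := by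
            apply Fin.ext; simp
          simp [Function.comp, this, Equiv.swap_apply_right]
        have e3 : ((v ∘ ⇑(Equiv.swap (0:Fin (k'+2)) 1)) ∘ Fin.succ) ∘ Fin.succ = (v ∘ Fin.succ) ∘ Fin.succ := by
          funext j; exact htail j
        have e4 : (v ∘ Fin.succ) 0 = v 1 := by
          have : Fin.succ (0 : Fin (k'+1)) = (1 : Fin (k'+2)) := by apply Fin.ext; simp
          simp [Function.comp, this]
        rw [e1, e2, e3, e4]
        have hne : v 1 ≠ v 0 := fun hh => by
          have := hv hh; exact absurd (congrArg Fin.val this) (by simp)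
        rw [← mul_assoc, ← mul_assoc, gam_anticomm r hne, neg_mul]
    · -- a = a'.succ
      have hb0 : b ≠ 0 := by
        intro hh; rw [hh] at hab; exact absurd hab (by simp)
      obtain ⟨a', rfl⟩ := Fin.eq_succ_of_ne_zero ha0
      obtain ⟨b', rfl⟩ := Fin.eq_succ_of_ne_zero hb0
      have hab' : (a':ℕ) + 1 = (b':ℕ) := by
        simpa [Fin.val_succ] using hab
      have hhead : (v ∘ ⇑(Equiv.swap a'.succ b'.succ)) 0 = v 0 := by
        have h1 : (0 : Fin (k+1)) ≠ a'.succ := (Fin.succ_ne_zero a').symm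
        have h2 : (0 : Fin (k+1)) ≠ b'.succ := (Fin.succ_ne_zero b').symm
        simp [Function.comp, Equiv.swap_apply_of_ne_of_ne h1 h2]
      have htail : (v ∘ ⇑(Equiv.swap a'.succ b'.succ)) ∘ Fin.succ
          = (v ∘ Fin.succ) ∘ ⇑(Equiv.swap a' b') := by
        funext j
        simp only [Function.comp]
        rw [swap_succ]
      rw [pl_succ, pl_succ r v, hhead, htail,
        ih (v ∘ Fin.succ) (hv.comp (Fin.succ_injective _)) a' b' hab', mul_neg]

lemma pl_swap_aux (r : ℕ) : ∀ (d : ℕ), ∀ {k : ℕ} (v : Fin k → Fin (2*r)), Function.Injective v →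
    ∀ (a b : Fin k), (a:ℕ) < (b:ℕ) → (b:ℕ) = (a:ℕ) + d + 1 →
    pl r (v ∘ Equiv.swap a b) = - pl r v := by
  intro d
  induction d using Nat.strong_induction_on with
  | _ d ihd =>
    intro k v hv a b hab hd
    match d with
    | 0 => exact pl_swap_adj r v hv a b (by omega)
    | Nat.succ e =>
      have hbk : (b:ℕ) < k := b.isLt
      have hck : (a:ℕ) + 1 < k := by omega
      set c : Fin k := ⟨(a:ℕ)+1, hck⟩ with hc
      have hcv : (c:ℕ) = (a:ℕ)+1 := rfl
      have hac : a ≠ c := by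
        intro hh; have := congrArg Fin.val hh; omega
      have hcb : c ≠ b := by
        intro hh; have := congrArg Fin.val hh; omega
      have hanb : a ≠ b := by
        intro hh; have := congrArg Fin.val hh; omega
      have hfun : v ∘ ⇑(Equiv.swap a b)
          = (((v ∘ ⇑(Equiv.swap a c)) ∘ ⇑(Equiv.swap c b)) ∘ ⇑(Equiv.swap a c)) := by
        funext x
        simp only [Function.comp]
        congr 1
        by_cases h1 : x = a
        · rw [h1, Equiv.swap_apply_left, Equiv.swap_apply_left, Equiv.swap_apply_left,
            Equiv.swap_apply_of_ne_of_ne hanb.symm hcb.symm]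
        by_cases h2 : x = b
        · rw [h2, Equiv.swap_apply_right,
            Equiv.swap_apply_of_ne_of_ne hanb.symm hcb.symm,
            Equiv.swap_apply_right, Equiv.swap_apply_right]
        by_cases h3 : x = c
        · rw [h3, Equiv.swap_apply_of_ne_of_ne hac.symm hcb,
            Equiv.swap_apply_right,
            Equiv.swap_apply_of_ne_of_ne hac hanb, Equiv.swap_apply_left]
        · rw [Equiv.swap_apply_of_ne_of_ne h1 h2, Equiv.swap_apply_of_ne_of_ne h1 h3,
            Equiv.swap_apply_of_ne_of_ne h3 h2, Equiv.swap_apply_of_ne_of_ne h1 h3]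
      rw [hfun]
      have hinj1 : Function.Injective ((v ∘ ⇑(Equiv.swap a c)) ∘ ⇑(Equiv.swap c b)) :=
        (hv.comp (Equiv.swap a c).injective).comp (Equiv.swap c b).injective
      rw [pl_swap_adj r _ hinj1 a c (by omega)]
      have hinj2 : Function.Injective (v ∘ ⇑(Equiv.swap a c)) :=
        hv.comp (Equiv.swap a c).injective
      rw [ihd e (by omega) _ hinj2 c b (by omega) (by omega)]
      rw [pl_swap_adj r v hv a c (by omega)]
      rw [neg_neg]

lemma pl_swap (r : ℕ) {k : ℕ} (v : Fin k → Fin (2*r)) (hv : Function.Injective v)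
    {a b : Fin k} (hab : a ≠ b) :
    pl r (v ∘ Equiv.swap a b) = - pl r v := by
  rcases lt_or_gt_of_ne (fun hh : (a:ℕ) = (b:ℕ) => hab (Fin.ext hh)) with h | h
  · exact pl_swap_aux r ((b:ℕ) - (a:ℕ) - 1) v hv a b h (by omega)
  · rw [Equiv.swap_comm]
    exact pl_swap_aux r ((a:ℕ) - (b:ℕ) - 1) v hv b a h (by omega)

lemma pl_perm (r : ℕ) {k : ℕ} (σ : Equiv.Perm (Fin k)) :
    ∀ (v : Fin k → Fin (2*r)), Function.Injective v →
      pl r (v ∘ ⇑σ) = ((Equiv.Perm.sign σ : ℤ) : ℂ) • pl r v := by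
  refine Equiv.Perm.swap_induction_on σ ?_ ?_
  · intro v _
    have h0 : v ∘ ⇑(1 : Equiv.Perm (Fin k)) = v := by funext x; rfl
    rw [h0]; simp
  · intro f x y hxy ih v hv
    have hcomp : v ∘ ⇑(Equiv.swap x y * f) = (v ∘ ⇑(Equiv.swap x y)) ∘ ⇑f := by
      funext j; simp [Function.comp, Equiv.Perm.mul_apply]
    rw [hcomp, ih _ (hv.comp (Equiv.swap x y).injective), pl_swap r v hv hxy,
      Equiv.Perm.sign_mul, Equiv.Perm.sign_swap hxy]
    push_cast
    rw [neg_one_mul, neg_smul, smul_neg]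

lemma Γbr_inj (r : ℕ) {k : ℕ} (v : Fin k → Fin (2*r)) (hv : Function.Injective v) :
    Γbr r k v = pl r v := by
  rw [Γbr]
  have h1 : ∀ σ : Equiv.Perm (Fin k),
      ((Equiv.Perm.sign σ : ℤ) : ℂ) • (List.ofFn fun j => Γgen r (v (σ j))).prod = pl r v := by
    intro σ
    have he : (List.ofFn fun j => Γgen r (v (σ j))).prod = pl r (v ∘ ⇑σ) := rfl
    have h2 : ((Equiv.Perm.sign σ : ℤ) : ℂ) * ((Equiv.Perm.sign σ : ℤ) : ℂ) = 1 := by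
      rcases Int.units_eq_one_or (Equiv.Perm.sign σ) with hh | hh <;> rw [hh] <;> norm_num
    rw [he, pl_perm r σ v hv, smul_smul, h2, one_smul]
  rw [Finset.sum_congr rfl (fun σ _ => h1 σ), Finset.sum_const, Finset.card_univ,
    Fintype.card_perm, Fintype.card_fin]
  rw [← Nat.cast_smul_eq_nsmul ℂ, smul_smul, inv_mul_cancel₀, one_smul]
  exact_mod_cast (Nat.factorial_ne_zero k)

lemma Γbr_zero (r : ℕ) {k : ℕ} (v : Fin k → Fin (2*r)) (hv : ¬ Function.Injective v) :
    Γbr r k v = 0 := by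
  obtain ⟨a, b, hvab, hab⟩ := Function.not_injective_iff.mp hv
  rw [Γbr]
  rw [Finset.sum_involution (g := fun σ _ => Equiv.swap a b * σ)]
  · rw [smul_zero]
  · intro σ _
    have hlist : (List.ofFn fun j => Γgen r (v ((Equiv.swap a b * σ) j)))
        = (List.ofFn fun j => Γgen r (v (σ j))) := by
      congr 1
      funext j
      rw [Equiv.Perm.mul_apply]
      congr 1
      rcases eq_or_ne (σ j) a with hh | hh
      · rw [hh, Equiv.swap_apply_left]; exact hvab.symm
      rcases eq_or_ne (σ j) b with hh2 | hh2
      · rw [hh2, Equiv.swap_apply_right]; exact hvab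
      · rw [Equiv.swap_apply_of_ne_of_ne hh hh2]
    rw [hlist, Equiv.Perm.sign_mul, Equiv.Perm.sign_swap hab]
    push_cast
    rw [neg_mul, one_mul, neg_smul, add_neg_cancel]
  · intro σ _ _
    intro hh
    have h2 : Equiv.swap a b (σ (σ.symm a)) = σ (σ.symm a) := by
      have := congrArg (fun τ : Equiv.Perm (Fin k) => τ (σ.symm a)) hh
      simpa [Equiv.Perm.mul_apply] using this
    rw [Equiv.apply_symm_apply, Equiv.swap_apply_left] at h2
    exact hab (h2.symm)
  · intro σ _; exact Finset.mem_univ _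
  · intro σ _; rw [← mul_assoc, Equiv.swap_mul_self, one_mul]

/-! ### The commuting involutions ξ_i and elementary symmetric sums -/

def xi (r : ℕ) (i : Fin (2*r)) : CC r := (Γgen r i) ⊗ₜ[ℂ] (Γgen r i)

lemma xi_comm (r : ℕ) (i j : Fin (2*r)) : Commute (xi r i) (xi r j) := by
  rcases eq_or_ne i j with rfl | h
  · exact Commute.refl _
  · show xi r i * xi r j = xi r j * xi r i
    rw [xi, xi, Algebra.TensorProduct.tmul_mul_tmul, Algebra.TensorProduct.tmul_mul_tmul,
      gam_anticomm r h, TensorProduct.neg_tmul, TensorProduct.tmul_neg, neg_neg]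

lemma xi_sq (r : ℕ) (i : Fin (2*r)) : xi r i * xi r i = 1 := by
  rw [xi, Algebra.TensorProduct.tmul_mul_tmul, gam_sq]
  exact (Algebra.TensorProduct.one_def).symm

lemma xi_pairwise (r : ℕ) (s : Finset (Fin (2*r))) :
    (↑s : Set (Fin (2*r))).Pairwise (Function.onFun Commute (xi r)) :=
  fun x _ y _ _ => xi_comm r x y

def Xi (r : ℕ) (A : Finset (Fin (2*r))) : CC r := A.noncommProd (xi r) (xi_pairwise r A)

def Em (r m : ℕ) : CC r :=
  ∑ A ∈ Finset.powersetCard m (Finset.univ : Finset (Fin (2*r))), Xi r A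

def Sx (r : ℕ) : CC r := ∑ i, xi r i

lemma Xi_empty (r : ℕ) : Xi r ∅ = 1 := Finset.noncommProd_empty _ _

lemma Xi_insert (r : ℕ) {A : Finset (Fin (2*r))} {i : Fin (2*r)} (h : i ∉ A) :
    Xi r (insert i A) = xi r i * Xi r A :=
  Finset.noncommProd_insert_of_notMem A i (xi r) _ h

lemma xi_mul_Xi_mem (r : ℕ) {A : Finset (Fin (2*r))} {i : Fin (2*r)} (h : i ∈ A) :
    xi r i * Xi r A = Xi r (A.erase i) := by
  conv_lhs => rw [show A = insert i (A.erase i) from (Finset.insert_erase h).symm]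
  rw [Xi_insert r (Finset.notMem_erase i A), ← mul_assoc, xi_sq, one_mul]

lemma pl_tmul (r : ℕ) : ∀ {k : ℕ} (v : Fin k → Fin (2*r)), Function.Injective v →
    (pl r v) ⊗ₜ[ℂ] (pl r v) = Xi r (Finset.image v Finset.univ) := by
  intro k
  induction k with
  | zero =>
    intro v _
    have h1 : pl r v = 1 := by rw [pl]; simp
    have h2 : Finset.image v Finset.univ = ∅ := by simp [Finset.univ_eq_empty]
    rw [h1, h2, Xi_empty]
    exact (Algebra.TensorProduct.one_def).symm
  | succ k ih =>
    intro v hv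
    have h0 : v 0 ∉ Finset.image (v ∘ Fin.succ) Finset.univ := by
      simp only [Finset.mem_image, Finset.mem_univ, true_and, Function.comp, not_exists]
      intro j hj
      exact (Fin.succ_ne_zero j) (hv hj)
    have himg : Finset.image v Finset.univ
        = insert (v 0) (Finset.image (v ∘ Fin.succ) Finset.univ) := by
      ext x
      simp only [Finset.mem_image, Finset.mem_univ, true_and, Finset.mem_insert, Function.comp]
      constructor
      · rintro ⟨i, rfl⟩
        rcases Fin.eq_zero_or_eq_succ i with rfl | ⟨j, rfl⟩
        · exact Or.inl rfl
        · exact Or.inr ⟨j, rfl⟩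
      · rintro (rfl | ⟨j, rfl⟩)
        · exact ⟨0, rfl⟩
        · exact ⟨j.succ, rfl⟩
    rw [pl_succ, ← Algebra.TensorProduct.tmul_mul_tmul,
      ih (v ∘ Fin.succ) (hv.comp (Fin.succ_injective _)), himg, Xi_insert r h0]
    rfl

lemma Ik_eq (r m : ℕ) : Ik r m = m.factorial • Em r m := by
  classical
  rw [Ik]
  rw [← Finset.sum_filter_add_sum_filter_not Finset.univ
    (fun v : Fin m → Fin (2*r) => Function.Injective v)]
  have hz : ∑ v ∈ Finset.univ.filter (fun v : Fin m → Fin (2*r) => ¬ Function.Injective v),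
      (Γbr r m v) ⊗ₜ[ℂ] (Γbr r m v) = 0 := by
    apply Finset.sum_eq_zero
    intro v hvmem
    rw [Γbr_zero r v (Finset.mem_filter.mp hvmem).2, TensorProduct.zero_tmul]
  rw [hz, add_zero]
  have h1 : ∀ v ∈ Finset.univ.filter (fun v : Fin m → Fin (2*r) => Function.Injective v),
      (Γbr r m v) ⊗ₜ[ℂ] (Γbr r m v) = Xi r (Finset.image v Finset.univ) := by
    intro v hvmem
    have hv := (Finset.mem_filter.mp hvmem).2
    rw [Γbr_inj r v hv, pl_tmul r v hv]
  rw [Finset.sum_congr rfl h1]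
  have hmaps : ∀ v ∈ Finset.univ.filter (fun v : Fin m → Fin (2*r) => Function.Injective v),
      Finset.image v Finset.univ ∈ Finset.powersetCard m (Finset.univ : Finset (Fin (2*r))) := by
    intro v hvmem
    have hv := (Finset.mem_filter.mp hvmem).2
    rw [Finset.mem_powersetCard]
    exact ⟨Finset.subset_univ _,
      by rw [Finset.card_image_of_injective _ hv, Finset.card_univ, Fintype.card_fin]⟩
  rw [← Finset.sum_fiberwise_of_maps_to hmaps]
  rw [Em, Finset.smul_sum]
  apply Finset.sum_congr rfl
  intro A hA
  have hAc : A.card = m := (Finset.mem_powersetCard.mp hA).2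
  have hcongr : ∀ v ∈ (Finset.univ.filter
      (fun v : Fin m → Fin (2*r) => Function.Injective v)).filter
      (fun v => Finset.image v Finset.univ = A),
      Xi r (Finset.image v Finset.univ) = Xi r A := by
    intro v hvmem
    rw [(Finset.mem_filter.mp hvmem).2]
  rw [Finset.sum_congr rfl hcongr, Finset.sum_const]
  congr 1
  have hcard : (Finset.univ : Finset (Equiv.Perm (Fin m))).card =
      ((Finset.univ.filter (fun v : Fin m → Fin (2*r) => Function.Injective v)).filter
        (fun v => Finset.image v Finset.univ = A)).card := by
    apply Finset.card_bij (i := fun π _ => fun j => ((A.orderIsoOfFin hAc) (π j) : Fin (2*r)))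
    · intro π _
      rw [Finset.mem_filter, Finset.mem_filter]
      refine ⟨⟨Finset.mem_univ _, ?_⟩, ?_⟩
      · intro x y hxy
        exact π.injective ((A.orderIsoOfFin hAc).injective (Subtype.coe_injective hxy))
      · ext x
        simp only [Finset.mem_image, Finset.mem_univ, true_and]
        constructor
        · rintro ⟨j, rfl⟩; exact ((A.orderIsoOfFin hAc) (π j)).2
        · intro hx
          refine ⟨π.symm ((A.orderIsoOfFin hAc).symm ⟨x, hx⟩), ?_⟩
          rw [Equiv.apply_symm_apply, OrderIso.apply_symm_apply]
    · intro π1 _ π2 _ heq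
      apply Equiv.ext
      intro j
      exact (A.orderIsoOfFin hAc).injective (Subtype.coe_injective (congrFun heq j))
    · intro v hvmem
      have hvinj : Function.Injective v :=
        (Finset.mem_filter.mp (Finset.mem_filter.mp hvmem).1).2
      have hvim : Finset.image v Finset.univ = A := (Finset.mem_filter.mp hvmem).2
      have hmem : ∀ j, v j ∈ A := by
        intro j; rw [← hvim]; exact Finset.mem_image_of_mem v (Finset.mem_univ j)
      have hinj : Function.Injective (fun j => (A.orderIsoOfFin hAc).symm ⟨v j, hmem j⟩) := by
        intro x y hxy
        have h3 : (⟨v x, hmem x⟩ : {z // z ∈ A}) = ⟨v y, hmem y⟩ :=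
          (A.orderIsoOfFin hAc).symm.injective hxy
        exact hvinj (congrArg Subtype.val h3)
      have hbij := Finite.injective_iff_bijective.mp hinj
      refine ⟨Equiv.ofBijective _ hbij, Finset.mem_univ _, ?_⟩
      funext j
      simp [Equiv.ofBijective, OrderIso.apply_symm_apply]
  rw [← hcard, Finset.card_univ, Fintype.card_perm, Fintype.card_fin]

lemma Em_zero (r : ℕ) : Em r 0 = 1 := by
  rw [Em, Finset.powersetCard_zero, Finset.sum_singleton, Xi_empty]

lemma Em_one (r : ℕ) : Em r 1 = Sx r := by
  rw [Em, Finset.powersetCard_one, Finset.sum_map, Sx]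
  apply Finset.sum_congr rfl
  intro i _
  simp only [Function.Embedding.coeFn_mk]
  exact Finset.noncommProd_singleton i (xi r)

lemma Sx_mul_Em (r m : ℕ) :
    Sx r * Em r (m+1) = (m+2) • Em r (m+2) + (2*r - m) • Em r m := by
  classical
  rw [Sx, Em, Finset.sum_mul_sum, Finset.sum_comm]
  have step : ∀ A ∈ Finset.powersetCard (m+1) (Finset.univ : Finset (Fin (2*r))),
      (∑ i, xi r i * Xi r A)
      = (∑ i ∈ A, Xi r (A.erase i)) + (∑ i ∈ Aᶜ, Xi r (insert i A)) := by
    intro A _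
    rw [← Finset.sum_filter_add_sum_filter_not Finset.univ (fun i => i ∈ A)]
    congr 1
    · rw [Finset.filter_mem_eq_inter, Finset.univ_inter]
      exact Finset.sum_congr rfl (fun i hi => xi_mul_Xi_mem r hi)
    · have hcompl : Finset.univ.filter (fun i => i ∉ A) = Aᶜ := by
        ext x; simp [Finset.mem_compl]
      rw [hcompl]
      exact Finset.sum_congr rfl (fun i hi => (Xi_insert r (Finset.mem_compl.mp hi)).symm)
  rw [Finset.sum_congr rfl step, Finset.sum_add_distrib]
  have T1 : ∑ A ∈ Finset.powersetCard (m+1) (Finset.univ : Finset (Fin (2*r))),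
      (∑ i ∈ A, Xi r (A.erase i)) = (2*r - m) • Em r m := by
    rw [Finset.sum_sigma']
    have hto : (∑ p ∈ (Finset.powersetCard (m+1) (Finset.univ : Finset (Fin (2*r)))).sigma
          (fun A => A), Xi r (p.1.erase p.2))
        = ∑ p ∈ (Finset.powersetCard m (Finset.univ : Finset (Fin (2*r)))).sigma
          (fun B => Bᶜ), Xi r p.1 := by
      apply Finset.sum_nbij' (i := fun p => ⟨p.1.erase p.2, p.2⟩)
        (j := fun p => ⟨insert p.2 p.1, p.2⟩)
      · intro p hp
        rw [Finset.mem_sigma] at hp ⊢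
        obtain ⟨hA, hi⟩ := hp
        rw [Finset.mem_powersetCard] at hA
        refine ⟨?_, ?_⟩
        · rw [Finset.mem_powersetCard]
          exact ⟨Finset.subset_univ _, by rw [Finset.card_erase_of_mem hi, hA.2]; omega⟩
        · rw [Finset.mem_compl]; exact Finset.notMem_erase _ _
      · intro p hp
        rw [Finset.mem_sigma] at hp ⊢
        obtain ⟨hB, hi⟩ := hp
        rw [Finset.mem_powersetCard] at hB
        rw [Finset.mem_compl] at hi
        refine ⟨?_, ?_⟩
        · rw [Finset.mem_powersetCard]
          exact ⟨Finset.subset_univ _, by rw [Finset.card_insert_of_notMem hi, hB.2]⟩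
        · exact Finset.mem_insert_self _ _
      · intro p hp
        rw [Finset.mem_sigma] at hp
        obtain ⟨A, i⟩ := p
        simp only
        rw [Finset.insert_erase hp.2]
      · intro p hp
        rw [Finset.mem_sigma] at hp
        obtain ⟨B, i⟩ := p
        simp only
        rw [Finset.erase_insert (Finset.mem_compl.mp hp.2)]
      · intro p _
        rfl
    rw [hto, Finset.sum_sigma, Em, Finset.smul_sum]
    apply Finset.sum_congr rfl
    intro B hB
    dsimp only
    rw [Finset.sum_const]
    congr 1
    rw [Finset.card_compl, Fintype.card_fin, (Finset.mem_powersetCard.mp hB).2]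
  have T2 : ∑ A ∈ Finset.powersetCard (m+1) (Finset.univ : Finset (Fin (2*r))),
      (∑ i ∈ Aᶜ, Xi r (insert i A)) = (m+2) • Em r (m+2) := by
    rw [Finset.sum_sigma']
    have hto : (∑ p ∈ (Finset.powersetCard (m+1) (Finset.univ : Finset (Fin (2*r)))).sigma
          (fun A => Aᶜ), Xi r (insert p.2 p.1))
        = ∑ p ∈ (Finset.powersetCard (m+2) (Finset.univ : Finset (Fin (2*r)))).sigma
          (fun C => C), Xi r p.1 := by
      apply Finset.sum_nbij' (i := fun p => ⟨insert p.2 p.1, p.2⟩)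
        (j := fun p => ⟨p.1.erase p.2, p.2⟩)
      · intro p hp
        rw [Finset.mem_sigma] at hp ⊢
        obtain ⟨hA, hi⟩ := hp
        rw [Finset.mem_powersetCard] at hA
        rw [Finset.mem_compl] at hi
        refine ⟨?_, ?_⟩
        · rw [Finset.mem_powersetCard]
          exact ⟨Finset.subset_univ _, by rw [Finset.card_insert_of_notMem hi, hA.2]⟩
        · exact Finset.mem_insert_self _ _
      · intro p hp
        rw [Finset.mem_sigma] at hp ⊢
        obtain ⟨hC, hi⟩ := hp
        rw [Finset.mem_powersetCard] at hC
        refine ⟨?_, ?_⟩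
        · rw [Finset.mem_powersetCard]
          exact ⟨Finset.subset_univ _, by rw [Finset.card_erase_of_mem hi, hC.2]; omega⟩
        · rw [Finset.mem_compl]; exact Finset.notMem_erase _ _
      · intro p hp
        rw [Finset.mem_sigma] at hp
        obtain ⟨A, i⟩ := p
        simp only
        rw [Finset.erase_insert (Finset.mem_compl.mp hp.2)]
      · intro p hp
        rw [Finset.mem_sigma] at hp
        obtain ⟨C, i⟩ := p
        simp only
        rw [Finset.insert_erase hp.2]
      · intro p _
        rfl
    rw [hto, Finset.sum_sigma, Em, Finset.smul_sum]
    apply Finset.sum_congr rfl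
    intro C hC
    dsimp only
    rw [Finset.sum_const]
    congr 1
    exact (Finset.mem_powersetCard.mp hC).2
  rw [T1, T2, add_comm]

/-! ### Minimal polynomial machinery -/

lemma invol_pow (r : ℕ) (a s : CC r) (ha : a * a = 1) (hc : Commute s a) (m : ℕ) :
    (s + a)^m = (s+1)^m * ((2:ℂ)⁻¹ • (1+a)) + (s-1)^m * ((2:ℂ)⁻¹ • (1-a)) := by
  induction m with
  | zero =>
    rw [pow_zero, pow_zero, pow_zero, one_mul, one_mul, ← smul_add]
    have h2 : (1+a) + (1-a) = (2:ℂ) • (1 : CC r) := by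
      have h3 : ((2:ℂ) • (1 : CC r)) = 1 + 1 := by rw [two_smul]
      rw [h3]; abel
    rw [h2, smul_smul, inv_mul_cancel₀ (two_ne_zero), one_smul]
  | succ m ih =>
    rw [pow_succ, ih, add_mul]
    have hp : ((2:ℂ)⁻¹ • (1+a)) * (s + a) = (s+1) * ((2:ℂ)⁻¹ • (1+a)) := by
      rw [smul_mul_assoc, mul_smul_comm]
      congr 1
      have e1 : (1+a) * (s+a) = s + a + (s*a + 1) := by
        rw [add_mul, one_mul, mul_add, ha, hc.symm.eq]
      have e2 : (s+1) * (1+a) = (s + s*a) + (1+a) := by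
        rw [add_mul, one_mul, mul_add, mul_one]
      rw [e1, e2]; abel
    have hm : ((2:ℂ)⁻¹ • (1-a)) * (s + a) = (s-1) * ((2:ℂ)⁻¹ • (1-a)) := by
      rw [smul_mul_assoc, mul_smul_comm]
      congr 1
      have e1 : (1-a) * (s+a) = (s + a) - (s*a + 1) := by
        rw [sub_mul, one_mul, mul_add, ha, hc.symm.eq]
      have e2 : (s-1) * (1-a) = (s - s*a) - (1-a) := by
        rw [sub_mul, one_mul, mul_sub, mul_one]
      rw [e1, e2]; abel
    rw [mul_assoc, mul_assoc, hp, hm, ← mul_assoc, ← mul_assoc, ← pow_succ, ← pow_succ]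

lemma aeval_split (r : ℕ) (a s : CC r) (ha : a * a = 1) (hc : Commute s a) (F : Polynomial ℂ) :
    Polynomial.aeval (s + a) F
      = Polynomial.aeval (s+1) F * ((2:ℂ)⁻¹ • (1+a))
        + Polynomial.aeval (s-1) F * ((2:ℂ)⁻¹ • (1-a)) := by
  induction F using Polynomial.induction_on' with
  | add p q hp hq =>
    rw [map_add, map_add, map_add, hp, hq, add_mul, add_mul]
    abel
  | monomial n c =>
    rw [Polynomial.aeval_monomial, Polynomial.aeval_monomial, Polynomial.aeval_monomial,
      invol_pow r a s ha hc n, mul_add, ← mul_assoc, ← mul_assoc]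

lemma minpoly_invol (r : ℕ) : ∀ (L : List (CC r)), (∀ x ∈ L, x * x = 1) →
    (∀ x ∈ L, ∀ y ∈ L, Commute x y) →
    ∀ c : ℂ, Polynomial.aeval (L.sum + algebraMap ℂ (CC r) c)
      (∏ p ∈ Finset.range (L.length + 1), (X - C ((L.length : ℂ) - 2*(p:ℂ) + c))) = 0 := by
  intro L
  induction L with
  | nil =>
    intro _ _ c
    rw [List.sum_nil, List.length_nil, zero_add, Finset.range_one, Finset.prod_singleton,
      map_sub, Polynomial.aeval_X, Polynomial.aeval_C]
    norm_num
  | cons a t ih =>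
    intro hsq hcm c
    have ha : a * a = 1 := hsq a (List.mem_cons_self)
    have hc : Commute (t.sum + algebraMap ℂ (CC r) c) a := by
      apply Commute.add_left
      · exact Commute.list_sum_left a t
          (fun b hb => hcm b (List.mem_cons_of_mem a hb) a (List.mem_cons_self))
      · exact Algebra.commute_algebraMap_left c a
    have hsum : (a :: t).sum + algebraMap ℂ (CC r) c = (t.sum + algebraMap ℂ (CC r) c) + a := by
      rw [List.sum_cons]; abel
    rw [hsum, aeval_split r a _ ha hc]
    have hsq' : ∀ x ∈ t, x * x = 1 := fun x hx => hsq x (List.mem_cons_of_mem a hx)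
    have hcm' : ∀ x ∈ t, ∀ y ∈ t, Commute x y :=
      fun x hx y hy => hcm x (List.mem_cons_of_mem a hx) y (List.mem_cons_of_mem a hy)
    have hlen : (a::t).length = t.length + 1 := rfl
    have h1 : Polynomial.aeval ((t.sum + algebraMap ℂ (CC r) c) + 1)
        (∏ p ∈ Finset.range ((a::t).length + 1),
          (X - C (((a::t).length : ℂ) - 2*(p:ℂ) + c))) = 0 := by
      rw [hlen]
      rw [Finset.prod_range_succ]
      have hG : (∏ p ∈ Finset.range (t.length + 1),
          (X - C (((t.length + 1 : ℕ) : ℂ) - 2*(p:ℂ) + c)))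
          = ∏ p ∈ Finset.range (t.length + 1),
            (X - C ((t.length : ℂ) - 2*(p:ℂ) + (c+1))) := by
        apply Finset.prod_congr rfl
        intro p _
        have h3 : ((t.length + 1 : ℕ) : ℂ) - 2*(p:ℂ) + c = (t.length : ℂ) - 2*(p:ℂ) + (c+1) := by
          push_cast; ring
        rw [h3]
      rw [hG, map_mul]
      have hplus : (t.sum + algebraMap ℂ (CC r) c) + 1 = t.sum + algebraMap ℂ (CC r) (c+1) := by
        rw [map_add, map_one]; abel
      rw [hplus, ih hsq' hcm' (c+1), zero_mul]
    have h2 : Polynomial.aeval ((t.sum + algebraMap ℂ (CC r) c) - 1)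
        (∏ p ∈ Finset.range ((a::t).length + 1),
          (X - C (((a::t).length : ℂ) - 2*(p:ℂ) + c))) = 0 := by
      rw [hlen]
      rw [Finset.prod_range_succ']
      have hG : (∏ p ∈ Finset.range (t.length + 1),
          (X - C (((t.length + 1 : ℕ) : ℂ) - 2*((p+1 : ℕ):ℂ) + c)))
          = ∏ p ∈ Finset.range (t.length + 1),
            (X - C ((t.length : ℂ) - 2*(p:ℂ) + (c-1))) := by
        apply Finset.prod_congr rfl
        intro p _
        have h3 : ((t.length + 1 : ℕ) : ℂ) - 2*((p+1 : ℕ):ℂ) + c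
            = (t.length : ℂ) - 2*(p:ℂ) + (c-1) := by
          push_cast; ring
        rw [h3]
      rw [hG, map_mul]
      have hminus : (t.sum + algebraMap ℂ (CC r) c) - 1 = t.sum + algebraMap ℂ (CC r) (c-1) := by
        rw [map_sub, map_one]; abel
      rw [hminus, ih hsq' hcm' (c-1), zero_mul]
    rw [h1, h2, zero_mul, zero_mul, add_zero]

lemma Sx_minpoly (r : ℕ) :
    Polynomial.aeval (Sx r)
      (∏ p ∈ Finset.range (2*r + 1), (X - C ((2*(r:ℂ)) - 2*(p:ℂ)))) = 0 := by
  have h := minpoly_invol r (List.ofFn (xi r))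
    (by intro x hx
        obtain ⟨i, rfl⟩ := List.mem_ofFn.mp hx
        exact xi_sq r i)
    (by intro x hx y hy
        obtain ⟨i, rfl⟩ := List.mem_ofFn.mp hx
        obtain ⟨j, rfl⟩ := List.mem_ofFn.mp hy
        exact xi_comm r i j) 0
  rw [List.sum_ofFn, List.length_ofFn, map_zero, add_zero] at h
  have e : (∏ p ∈ Finset.range (2*r + 1), (X - C ((2*(r:ℂ)) - 2*(p:ℂ))))
      = ∏ p ∈ Finset.range (2*r + 1), (X - C (((2*r : ℕ) : ℂ) - 2*(p:ℂ) + 0)) := by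
    apply Finset.prod_congr rfl
    intro p _
    have h3 : (2*(r:ℂ)) - 2*(p:ℂ) = ((2*r : ℕ) : ℂ) - 2*(p:ℂ) + 0 := by push_cast; ring
    rw [h3]
  rw [Sx, e]
  exact h

lemma poly_id : ∀ m : ℕ,
    X * ∏ j ∈ Finset.range m, ((X - C ((2*(m:ℂ)) - 2*(j:ℂ))) * (X + C ((2*(m:ℂ)) - 2*(j:ℂ))))
    = ∏ p ∈ Finset.range (2*m + 1), (X - C ((2*(m:ℂ)) - 2*(p:ℂ))) := by
  intro m
  induction m with
  | zero => simp
  | succ m ih =>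
    have hidx : 2*(m+1) + 1 = (2*m + 1) + 1 + 1 := by ring
    rw [hidx]
    conv_rhs => rw [Finset.prod_range_succ, Finset.prod_range_succ']
    conv_lhs => rw [Finset.prod_range_succ']
    have e1 : (∏ j ∈ Finset.range m,
        ((X - C ((2*((m+1 : ℕ):ℂ)) - 2*((j+1 : ℕ):ℂ))) * (X + C ((2*((m+1 : ℕ):ℂ)) - 2*((j+1 : ℕ):ℂ)))))
        = ∏ j ∈ Finset.range m,
          ((X - C ((2*(m:ℂ)) - 2*(j:ℂ))) * (X + C ((2*(m:ℂ)) - 2*(j:ℂ)))) := by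
      apply Finset.prod_congr rfl
      intro j _
      have h3 : (2*((m+1 : ℕ):ℂ)) - 2*((j+1 : ℕ):ℂ) = (2*(m:ℂ)) - 2*(j:ℂ) := by push_cast; ring
      rw [h3]
    have e2 : (∏ p ∈ Finset.range (2*m + 1),
        (X - C ((2*((m+1 : ℕ):ℂ)) - 2*((p+1 : ℕ):ℂ))))
        = ∏ p ∈ Finset.range (2*m + 1), (X - C ((2*(m:ℂ)) - 2*(p:ℂ))) := by
      apply Finset.prod_congr rfl
      intro p _
      have h3 : (2*((m+1 : ℕ):ℂ)) - 2*((p+1 : ℕ):ℂ) = (2*(m:ℂ)) - 2*(p:ℂ) := by push_cast; ring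
      rw [h3]
    have e3 : (2*((m+1 : ℕ):ℂ)) - 2*(((0:ℕ)):ℂ) = 2*((m:ℂ)+1) := by push_cast; ring
    have e4 : (2*((m+1 : ℕ):ℂ)) - 2*(((2*m+1+1 : ℕ)):ℂ) = -(2*((m:ℂ)+1)) := by push_cast; ring
    rw [e1, e2, e3, e4, map_neg, sub_neg_eq_add]
    linear_combination ((X - C (2*((m:ℂ)+1))) * (X + C (2*((m:ℂ)+1)))) * ih

/-! ### The Casimir in terms of Sx, and S·P_r = 0 -/

lemma two_Em_two (r : ℕ) : Ik r 2 = Sx r * Sx r - (2*r) • (1 : CC r) := by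
  have h := Sx_mul_Em r 0
  simp only [zero_add, Nat.sub_zero, Em_one, Em_zero] at h
  rw [Ik_eq]
  have h2 : (Nat.factorial 2) = 2 := rfl
  rw [h2, eq_sub_iff_add_eq]
  exact h.symm

def lam (r j : ℕ) : ℂ := 2*(r:ℂ) - 2*(j:ℂ)

lemma hr1 (r : ℕ) (hr : 2 ≤ r) : (r:ℂ) - 1 ≠ 0 := by
  intro hh
  have h2 : (r:ℂ) = 1 := by linear_combination hh
  have h3 : ((r:ℕ):ℂ) = ((1:ℕ):ℂ) := by rw [h2]; norm_num
  have h4 : r = 1 := Nat.cast_injective h3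
  omega

lemma cEv_key (r : ℕ) (hr : 2 ≤ r) (j : ℕ) :
    cEv r j = (-(16*(2*(r:ℂ)-2))⁻¹) * ((lam r j)^2 - 2*(r:ℂ)) := by
  have h1 := hr1 r hr
  have h16 : (16:ℂ)*((r:ℂ)-1) ≠ 0 := by
    intro hh
    rcases mul_eq_zero.mp hh with h | h
    · norm_num at h
    · exact h1 h
  have h32 : (16:ℂ)*(2*(r:ℂ)-2) ≠ 0 := by
    intro hh
    apply h16
    linear_combination hh / 2
  rw [cEv, lam, div_eq_iff h16]
  field_simp [h32]
  ring

lemma factor_eq (r : ℕ) (hr : 2 ≤ r) (j : ℕ) :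
    sC r - cEv r j • (1 : CC r) = (-(16*(2*(r:ℂ)-2))⁻¹) •
      (Sx r * Sx r - ((lam r j)^2) • (1:CC r)) := by
  rw [sC, two_Em_two, smul_sub, smul_sub, sub_sub]
  congr 1
  rw [← Nat.cast_smul_eq_nsmul ℂ, smul_smul, smul_smul, ← add_smul]
  congr 1
  rw [cEv_key r hr j]
  push_cast
  ring

lemma list_aeval_prod (r : ℕ) (d : ℕ → ℂ) (g : ℕ → Polynomial ℂ) : ∀ m : ℕ,
    ((List.range m).map (fun j => d j • Polynomial.aeval (Sx r) (g j))).prod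
    = (∏ j ∈ Finset.range m, d j) • Polynomial.aeval (Sx r) (∏ j ∈ Finset.range m, g j) := by
  intro m
  induction m with
  | zero => simp
  | succ m ih =>
    rw [List.range_succ, List.map_append, List.prod_append, List.map_singleton,
      List.prod_singleton, ih, Finset.prod_range_succ, Finset.prod_range_succ,
      smul_mul_smul_comm, ← map_mul]

lemma Pk_list (r : ℕ) : ((List.range (r+1)).filter (fun j => j ≠ r)) = List.range r := by
  rw [List.range_succ, List.filter_append]
  have h1 : (List.range r).filter (fun j => j ≠ r) = List.range r := by
    apply List.filter_eq_self.mpr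
    intro a ha
    have h2 : a < r := List.mem_range.mp ha
    simp only [ne_eq, decide_eq_true_eq]
    omega
  have h2 : ([r].filter (fun j => j ≠ r)) = [] := by simp
  rw [h1, h2, List.append_nil]

lemma Pk_eq (r : ℕ) (hr : 2 ≤ r) :
    Pk r r = (∏ j ∈ Finset.range r, ((cEv r r - cEv r j)⁻¹ * (-(16*(2*(r:ℂ)-2))⁻¹))) •
      Polynomial.aeval (Sx r)
        (∏ j ∈ Finset.range r, ((X - C (lam r j)) * (X + C (lam r j)))) := by
  rw [Pk, Pk_list]
  have hmap : (List.range r).map (fun j => (cEv r r - cEv r j)⁻¹ • (sC r - cEv r j • (1:CC r)))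
      = (List.range r).map (fun j => ((cEv r r - cEv r j)⁻¹ * (-(16*(2*(r:ℂ)-2))⁻¹)) •
          Polynomial.aeval (Sx r) ((X - C (lam r j)) * (X + C (lam r j)))) := by
    apply List.map_congr_left
    intro j _
    rw [factor_eq r hr j, smul_smul]
    congr 1
    rw [map_mul, map_sub, map_add, Polynomial.aeval_X, Polynomial.aeval_C,
      Algebra.algebraMap_eq_smul_one]
    rw [mul_add, sub_mul, sub_mul, smul_mul_assoc, one_mul, mul_smul_comm, mul_one,
      smul_mul_smul_comm, one_mul, sq]
    abel
  rw [hmap, list_aeval_prod]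

lemma Sx_mul_Pk (r : ℕ) (hr : 2 ≤ r) : Sx r * Pk r r = 0 := by
  rw [Pk_eq r hr, mul_smul_comm]
  have h1 : Sx r * Polynomial.aeval (Sx r)
        (∏ j ∈ Finset.range r, ((X - C (lam r j)) * (X + C (lam r j))))
      = Polynomial.aeval (Sx r)
        (X * ∏ j ∈ Finset.range r, ((X - C (lam r j)) * (X + C (lam r j)))) := by
    rw [map_mul, Polynomial.aeval_X]
  rw [h1]
  have h2 : (X : Polynomial ℂ) * ∏ j ∈ Finset.range r, ((X - C (lam r j)) * (X + C (lam r j)))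
      = ∏ p ∈ Finset.range (2*r + 1), (X - C ((2*(r:ℂ)) - 2*(p:ℂ))) := by
    simpa [lam] using poly_id r
  rw [h2, Sx_minpoly, smul_zero]

lemma commute_Sx_Em (r m : ℕ) : Commute (Sx r) (Em r m) := by
  apply Commute.sum_right
  intro A _
  apply Commute.sum_left
  intro i _
  exact Finset.noncommProd_commute _ _ _ _ (fun j _ => xi_comm r i j)

lemma Em_mul_Pk (r : ℕ) (hr : 2 ≤ r) : ∀ k : ℕ,
    Em r (2*k) * Pk r r = ((-1:ℂ)^k * (r.choose k : ℂ)) • Pk r r := by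
  intro k
  induction k with
  | zero =>
    rw [show 2*0 = 0 from rfl, Em_zero, one_mul]
    norm_num
  | succ k ih =>
    have hidx : 2*(k+1) = 2*k+2 := by ring
    rcases le_or_gt r k with hk | hk
    · have hEm : Em r (2*(k+1)) = 0 := by
        rw [Em, Finset.powersetCard_eq_empty.mpr ?_, Finset.sum_empty]
        rw [Finset.card_univ, Fintype.card_fin]; omega
      rw [hEm, zero_mul, Nat.choose_eq_zero_of_lt (by omega), Nat.cast_zero, mul_zero, zero_smul]
    · have hrec := Sx_mul_Em r (2*k)
      have hz : (Sx r * Em r (2*k+1)) * Pk r r = 0 := by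
        rw [(commute_Sx_Em r (2*k+1)).eq, mul_assoc, Sx_mul_Pk r hr, mul_zero]
      rw [hrec, add_mul, ← Nat.cast_smul_eq_nsmul ℂ (2*k+2), ← Nat.cast_smul_eq_nsmul ℂ (2*r-2*k),
        smul_mul_assoc, smul_mul_assoc, ih, smul_smul] at hz
      have hne : (((2*k+2 : ℕ)) : ℂ) ≠ 0 := Nat.cast_ne_zero.mpr (by omega)
      have hEP := eq_neg_of_add_eq_zero_left hz
      rw [← neg_smul] at hEP
      have h3 := congrArg (fun z => ((((2*k+2 : ℕ)) : ℂ))⁻¹ • z) hEP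
      simp only [smul_smul, inv_mul_cancel₀ hne, one_smul] at h3
      rw [hidx, h3]
      congr 1
      have hcast : ((2*r - 2*k : ℕ) : ℂ) = 2*(r:ℂ) - 2*(k:ℂ) := by
        have h5 : 2*k ≤ 2*r := by omega
        rw [Nat.cast_sub h5]
        push_cast; ring
      have hch : ((r.choose (k+1)) : ℂ) * ((k:ℂ)+1) = (r.choose k : ℂ) * ((r:ℂ) - (k:ℂ)) := by
        have h4 := Nat.choose_succ_right_eq r k
        have h5 : ((r.choose (k+1) * (k+1) : ℕ) : ℂ) = ((r.choose k * (r - k) : ℕ) : ℂ) := by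
          exact_mod_cast congrArg (fun n : ℕ => (n : ℂ)) h4
        rw [Nat.cast_mul, Nat.cast_mul, Nat.cast_sub (le_of_lt hk)] at h5
        push_cast at h5 ⊢
        linear_combination h5
      rw [hcast]
      push_cast
      have h6 : ((2:ℂ)*(k:ℂ)+2) ≠ 0 := by
        intro hh
        have := hne
        push_cast at this
        exact this hh
      field_simp
      linear_combination ((-1:ℂ)^k) * hch

/-! ### The chirality factor -/

def Qel (r : ℕ) : CC r := ppCh r 1 1 + ppCh r (-1) (-1)

lemma Qel_eq (r : ℕ) : Qel r = (2:ℂ)⁻¹ • (1 + (Γtop r) ⊗ₜ[ℂ] (Γtop r)) := by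
  simp only [Qel, ppCh, pCh, TensorProduct.add_tmul, TensorProduct.tmul_add,
    TensorProduct.tmul_smul, ← TensorProduct.smul_tmul', smul_add, smul_smul,
    Algebra.TensorProduct.one_def]
  match_scalars <;> norm_num

lemma gam_move (r : ℕ) (a : Fin (2*r)) (l : List (Fin (2*r))) :
    ∃ ε : ℂ, (ε = 1 ∨ ε = -1) ∧
      Γgen r a * (l.map (Γgen r)).prod = ε • ((l.map (Γgen r)).prod * Γgen r a) := by
  induction l with
  | nil => exact ⟨1, Or.inl rfl, by simp⟩
  | cons b t ih =>
    obtain ⟨ε, hε, hmul⟩ := ih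
    rcases eq_or_ne a b with rfl | hab
    · refine ⟨ε, hε, ?_⟩
      have hε2 : ε * ε = 1 := by rcases hε with h|h <;> rw [h] <;> norm_num
      rw [List.map_cons, List.prod_cons, ← mul_assoc, gam_sq, one_mul,
        hmul, smul_mul_assoc, mul_assoc, gam_sq, mul_one, smul_smul, hε2, one_smul]
    · refine ⟨-ε, by rcases hε with h|h <;> rw [h] <;> norm_num, ?_⟩
      rw [List.map_cons, List.prod_cons, ← mul_assoc, gam_anticomm r hab, neg_mul, mul_assoc,
        hmul, mul_smul_comm, ← mul_assoc, ← neg_smul]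

lemma xi_commute_tmulsq (r : ℕ) (l : List (Fin (2*r))) (i : Fin (2*r)) :
    Commute (xi r i) (((l.map (Γgen r)).prod) ⊗ₜ[ℂ] ((l.map (Γgen r)).prod)) := by
  obtain ⟨ε, hε, hmul⟩ := gam_move r i l
  show _ * _ = _ * _
  rw [xi, Algebra.TensorProduct.tmul_mul_tmul, Algebra.TensorProduct.tmul_mul_tmul, hmul,
    ← TensorProduct.smul_tmul', TensorProduct.tmul_smul, smul_smul]
  rcases hε with h | h <;> rw [h] <;> norm_num

lemma xi_commute_Qel (r : ℕ) (i : Fin (2*r)) : Commute (xi r i) (Qel r) := by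
  rw [Qel_eq]
  apply Commute.smul_right
  apply Commute.add_right (Commute.one_right _)
  rw [Γtop, List.ofFn_eq_map, ← TensorProduct.smul_tmul', TensorProduct.tmul_smul, smul_smul]
  exact Commute.smul_right (xi_commute_tmulsq r _ i) _

lemma Em_commute_Qel (r m : ℕ) : Commute (Em r m) (Qel r) := by
  apply Commute.sum_left
  intro A _
  exact (Finset.noncommProd_commute _ _ _ _ (fun i _ => (xi_commute_Qel r i).symm)).symm

/-! ### Vandermonde -/

lemma asc_succ (u : ℂ) (m : ℕ) : asc u (m+1) = asc u m * (u/2 + (m:ℂ)) :=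
  Finset.prod_range_succ _ m

lemma asc_zero (u : ℂ) : asc u 0 = 1 := rfl

lemma vand (u : ℂ) : ∀ r : ℕ,
    (∑ k ∈ Finset.range (r+1), (r.choose k : ℂ) * asc u k * asc u (r-k))
    = ∏ k ∈ Finset.range r, (u + (k:ℂ)) := by
  intro r
  induction r with
  | zero => simp [asc]
  | succ r ih =>
    have hA : ∀ k : ℕ, (r+1-(k+1)) = r - k := fun k => by omega
    have hper : ∀ k ∈ Finset.range (r+1),
        ((r.choose k : ℂ)) * asc u (k+1) * asc u (r-k)
          + ((r.choose k : ℂ)) * asc u k * asc u (r+1-k)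
        = (u + (r:ℂ)) * (((r.choose k : ℂ)) * asc u k * asc u (r-k)) := by
      intro k hk
      have hkr : k ≤ r := by have := Finset.mem_range.mp hk; omega
      have h6 : r + 1 - k = (r - k) + 1 := by omega
      rw [h6, asc_succ, asc_succ]
      have h7 : ((r - k : ℕ) : ℂ) = (r:ℂ) - (k:ℂ) := by rw [Nat.cast_sub hkr]
      rw [h7]
      ring
    have hshift : (∑ k ∈ Finset.range (r+1), ((r.choose (k+1) : ℂ)) * asc u (k+1) * asc u (r-k))
        = (∑ k ∈ Finset.range (r+1), ((r.choose k : ℂ)) * asc u k * asc u (r+1-k))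
          - asc u (r+1) := by
      have hT := Finset.sum_range_succ' (fun k => ((r.choose k : ℂ)) * asc u k * asc u (r+1-k)) (r+1)
      have hT2 := Finset.sum_range_succ (fun k => ((r.choose k : ℂ)) * asc u k * asc u (r+1-k)) (r+1)
      have hz : ((r.choose (r+1)) : ℂ) = 0 := by
        rw [Nat.choose_eq_zero_of_lt (by omega)]; norm_num
      have hcongr2 : ∀ k ∈ Finset.range (r+1),
          ((r.choose (k+1) : ℂ)) * asc u (k+1) * asc u (r+1-(k+1))
          = ((r.choose (k+1) : ℂ)) * asc u (k+1) * asc u (r-k) := by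
        intro k _; rw [hA k]
      rw [Finset.sum_congr rfl hcongr2] at hT
      rw [hz] at hT2
      have hf0 : ((r.choose 0 : ℂ)) * asc u 0 * asc u (r+1-0) = asc u (r+1) := by
        norm_num [asc_zero]
      rw [hf0] at hT
      have hcomb := hT.symm.trans hT2
      -- hcomb : Σ shifted + asc u (r+1) = Σ + 0 * (asc u (r+1) * asc u (r+1-(r+1)))
      linear_combination hcomb
    have key : (∑ k ∈ Finset.range (r+2), ((r+1).choose k : ℂ) * asc u k * asc u (r+1-k))
        = (u + (r:ℂ)) * ∑ k ∈ Finset.range (r+1), (r.choose k : ℂ) * asc u k * asc u (r-k) := by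
      rw [Finset.sum_range_succ']
      have hstep : ∀ k ∈ Finset.range (r+1),
          (((r+1).choose (k+1) : ℂ)) * asc u (k+1) * asc u (r+1-(k+1))
          = ((r.choose k : ℂ)) * asc u (k+1) * asc u (r-k)
            + ((r.choose (k+1) : ℂ)) * asc u (k+1) * asc u (r-k) := by
        intro k _
        rw [hA k, Nat.choose_succ_succ']
        push_cast
        ring
      rw [Finset.sum_congr rfl hstep, Finset.sum_add_distrib, hshift]
      have h8 : (((r+1).choose 0 : ℂ)) * asc u 0 * asc u (r+1-0) = asc u (r+1) := by
        norm_num [asc_zero]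
      rw [h8]
      have hsum : (∑ k ∈ Finset.range (r+1), ((r.choose k : ℂ)) * asc u (k+1) * asc u (r-k))
            + (∑ k ∈ Finset.range (r+1), ((r.choose k : ℂ)) * asc u k * asc u (r+1-k))
          = (u + (r:ℂ)) * ∑ k ∈ Finset.range (r+1), ((r.choose k : ℂ)) * asc u k * asc u (r-k) := by
        rw [← Finset.sum_add_distrib, Finset.mul_sum]
        exact Finset.sum_congr rfl hper
      linear_combination hsum
    rw [key, ih, Finset.prod_range_succ, mul_comm]

/-! ### Final assembly -/

end RSaux

/-- `(Σ_{k=0}^{r} ((−1)^k/(2k)!)·a_k(u)·a_{r−k}(u)·I_{2k})·P_r^S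
  = (Π_{k=0}^{r−1}(u+k))·P_r^S`. -/
theorem RS_mul_PrS (r : ℕ) (hr : 2 ≤ r) (u : ℂ) :
    (∑ k ∈ Finset.range (r+1),
        (((-1:ℂ)^k / (((2*k).factorial : ℕ) : ℂ)) * asc u k * asc u (r-k)) • Ik r (2*k))
      * PrS r
      = (∏ k ∈ Finset.range r, (u + (k:ℂ))) • PrS r := by
  have hPrS : PrS r = RSaux.Qel r * Pk r r := rfl
  have key : ∀ k : ℕ, Ik r (2*k) * PrS r
      = (((2*k).factorial : ℂ) * ((-1:ℂ)^k * (r.choose k : ℂ))) • PrS r := by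
    intro k
    rw [hPrS, RSaux.Ik_eq, ← Nat.cast_smul_eq_nsmul ℂ, smul_mul_assoc, ← mul_assoc,
      (RSaux.Em_commute_Qel r (2*k)).eq, mul_assoc, RSaux.Em_mul_Pk r hr k, mul_smul_comm,
      smul_smul]
  rw [Finset.sum_mul]
  have hterm : ∀ k ∈ Finset.range (r+1),
      ((((-1:ℂ)^k / (((2*k).factorial : ℕ) : ℂ)) * asc u k * asc u (r-k)) • Ik r (2*k)) * PrS r
      = ((r.choose k : ℂ) * asc u k * asc u (r-k)) • PrS r := by
    intro k _
    rw [smul_mul_assoc, key k, smul_smul]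
    congr 1
    have hne : (((2*k).factorial : ℕ) : ℂ) ≠ 0 := Nat.cast_ne_zero.mpr (Nat.factorial_ne_zero _)
    have hsign : (-1:ℂ)^k * (-1:ℂ)^k = 1 := by
      rw [← pow_add]
      have h7 : k + k = 2*k := by ring
      rw [h7, pow_mul]
      norm_num
    field_simp
    linear_combination (r.choose k : ℂ) * asc u k * asc u (r-k) * hsign
  rw [Finset.sum_congr rfl hterm, ← Finset.sum_smul, RSaux.vand u r]


end
end
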